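/- arXiv:2203.12822 — 6 statements merged into one kernel-verified Lean document; each statement's English description precedes it below -/
import Mathlib

section
/- Let (Y, μ) be a set equipped with a finite measure, let q > 1, let G be a real normed space, and let T : G → L^q(Y, μ) be a bounded injective linear map such that every bounded sequence (u_k) in G contains a subsequence (u_{k_j}) for which the functions T u_{k_j} converge μ-almost everywhere on Y. Then for every s with 1 ≤ s < q, the map u ↦ T u, regarded as a map from G into L^s(Y, μ) (well-defined since μ is finite, so L^q(Y,μ) ⊆ L^s(Y,μ)), is compact, i.e., it maps bounded subsets of G to relatively compact subsets of L^s(Y, μ). -/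
open MeasureTheory Filter Bornology Topology
open scoped ENNReal NNReal

/-- Abstract Rellich–Kondrachov compactness theorem (Proposition 2.6 of the paper):
if `T : G → L^q(Y, μ)` is a bounded injective linear map on a finite measure space with
`q > 1`, such that every bounded sequence in `G` has a subsequence whose images converge
`μ`-a.e., then for every `1 ≤ s < q` the induced map `G → L^s(Y, μ)` is compact. -/
theorem stmt_0
    {Y : Type*} [MeasurableSpace Y] (μ : Measure Y) [IsFiniteMeasure μ]
    (q : ℝ) (hq : 1 < q) [Fact (1 ≤ ENNReal.ofReal q)]
    {G : Type*} [NormedAddCommGroup G] [NormedSpace ℝ G]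
    (T : G →L[ℝ] Lp ℝ (ENNReal.ofReal q) μ)
    (hT_inj : Function.Injective T)
    (hae : ∀ u : ℕ → G, IsBounded (Set.range u) →
      ∃ k : ℕ → ℕ, StrictMono k ∧ ∃ f : Y → ℝ,
        ∀ᵐ y ∂μ, Tendsto (fun j => (T (u (k j)) : Y → ℝ) y) atTop (nhds (f y)))
    (s : ℝ) (hs1 : 1 ≤ s) (hsq : s < q) [Fact (1 ≤ ENNReal.ofReal s)] :
    ∀ B : Set G, IsBounded B →
      IsCompact (closure ((fun u : G =>
        ((Lp.memLp (T u)).mono_exponent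
          (ENNReal.ofReal_le_ofReal hsq.le)).toLp (T u : Y → ℝ)) '' B)) := by
  intro B hB
  have hs0 : (0:ℝ) < s := lt_of_lt_of_le one_pos hs1
  have hq0 : (0:ℝ) < q := lt_trans one_pos hq
  set ps := ENNReal.ofReal s with hps_def
  set pq := ENNReal.ofReal q with hpq_def
  have hps1 : (1:ENNReal) ≤ ps := Fact.out
  have hps_ne_top : ps ≠ ∞ := ENNReal.ofReal_ne_top
  have hspq : ps ≤ pq := ENNReal.ofReal_le_ofReal hsq.le
  set F : G → Lp ℝ ps μ := fun u =>
    ((Lp.memLp (T u)).mono_exponent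
      (ENNReal.ofReal_le_ofReal hsq.le)).toLp (T u : Y → ℝ) with hF_def
  apply IsSeqCompact.isCompact
  intro x hx
  -- choose approximating points in the image
  have hchoice : ∀ n : ℕ, ∃ v, v ∈ B ∧ dist (x n) (F v) < 1/(n+1) := by
    intro n
    obtain ⟨y, hy, hxy⟩ := Metric.mem_closure_iff.1 (hx n) (1/(n+1)) (by positivity)
    obtain ⟨v, hvB, rfl⟩ := hy
    exact ⟨v, hvB, hxy⟩
  choose u huB hud using hchoice
  have hu_bdd : IsBounded (Set.range u) := hB.subset (Set.range_subset_iff.2 huB)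
  obtain ⟨k, hk, f, hf_ae⟩ := hae u hu_bdd
  -- uniform bound on the L^q norms
  obtain ⟨R, hR⟩ := (isBounded_iff_forall_norm_le).1 hu_bdd
  have hR0 : (0:ℝ) ≤ R := le_trans (norm_nonneg (u 0)) (hR _ ⟨0, rfl⟩)
  set C₀ : ℝ := ‖T‖ * R with hC₀_def
  have hC₀0 : (0:ℝ) ≤ C₀ := mul_nonneg (norm_nonneg _) hR0
  have hnorm : ∀ v : Lp ℝ pq μ, eLpNorm (v : Y → ℝ) pq μ = ENNReal.ofReal ‖v‖ := fun v => by
    rw [Lp.norm_def, ENNReal.ofReal_toReal (Lp.eLpNorm_ne_top v)]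
  have hC : ∀ n : ℕ, eLpNorm ((T (u n) : Y → ℝ)) pq μ ≤ ENNReal.ofReal C₀ := by
    intro n
    rw [hnorm]
    exact ENNReal.ofReal_le_ofReal <| le_trans (T.le_opNorm _)
      (mul_le_mul_of_nonneg_left (hR _ ⟨n, rfl⟩) (norm_nonneg (T : G →L[ℝ] Lp ℝ pq μ)))
  -- the a.e. limit is in L^q, hence in L^s
  have haef : ∀ j : ℕ, AEStronglyMeasurable ((T (u (k j)) : Y → ℝ)) μ := fun j =>
    (Lp.memLp (T (u (k j)))).aestronglyMeasurable
  have hf_meas : AEStronglyMeasurable f μ :=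
    aestronglyMeasurable_of_tendsto_ae atTop haef hf_ae
  have hf_q : MemLp f pq μ := by
    refine ⟨hf_meas, lt_of_le_of_lt (Lp.eLpNorm_lim_le_liminf_eLpNorm haef f hf_ae) ?_⟩
    calc atTop.liminf (fun j => eLpNorm ((T (u (k j)) : Y → ℝ)) pq μ)
        ≤ atTop.liminf (fun _ : ℕ => ENNReal.ofReal C₀) :=
          liminf_le_liminf (Eventually.of_forall fun j => hC (k j))
      _ = ENNReal.ofReal C₀ := liminf_const _
      _ < ∞ := ENNReal.ofReal_lt_top
  have hf_s : MemLp f ps μ := hf_q.mono_exponent hspq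
  -- key interpolation estimate
  set e : ℝ := 1/s - 1/q with he_def
  have he_pos : 0 < e := sub_pos.2 (one_div_lt_one_div_of_lt hs0 hsq)
  have key : ∀ (g : Y → ℝ), AEStronglyMeasurable g μ → ∀ E : Set Y, MeasurableSet E →
      eLpNorm (E.indicator g) ps μ ≤ eLpNorm g pq μ * (μ E) ^ e := by
    intro g hg E hE
    rw [eLpNorm_indicator_eq_eLpNorm_restrict hE]
    calc eLpNorm g ps (μ.restrict E)
        ≤ eLpNorm g pq (μ.restrict E) *
            (μ.restrict E Set.univ) ^ (1/ps.toReal - 1/pq.toReal) :=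
          eLpNorm_le_eLpNorm_mul_rpow_measure_univ hspq hg.restrict
      _ ≤ eLpNorm g pq μ * (μ E) ^ e := by
          rw [Measure.restrict_apply_univ, hps_def, hpq_def, ENNReal.toReal_ofReal hs0.le,
            ENNReal.toReal_ofReal hq0.le]
          exact mul_le_mul_left (eLpNorm_restrict_le _ _ _ _) _
  -- uniform integrability
  have hui : UnifIntegrable (fun j => ((T (u (k j)) : Y → ℝ))) ps μ := by
    intro ε hε
    refine ⟨(ε / (C₀ + 1)) ^ (1/e), Real.rpow_pos_of_pos (by positivity) _, fun j E hE hμE => ?_⟩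
    calc eLpNorm (E.indicator ((T (u (k j)) : Y → ℝ))) ps μ
        ≤ eLpNorm ((T (u (k j)) : Y → ℝ)) pq μ * (μ E) ^ e := key _ (haef j) E hE
      _ ≤ ENNReal.ofReal C₀ * (ENNReal.ofReal ((ε / (C₀ + 1)) ^ (1/e))) ^ e :=
          mul_le_mul' (hC (k j)) (ENNReal.rpow_le_rpow hμE he_pos.le)
      _ ≤ ENNReal.ofReal ε := by
          rw [ENNReal.ofReal_rpow_of_nonneg (by positivity) he_pos.le,
            one_div, Real.rpow_inv_rpow (by positivity) he_pos.ne',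
            ← ENNReal.ofReal_mul hC₀0]
          refine ENNReal.ofReal_le_ofReal ?_
          calc C₀ * (ε / (C₀ + 1)) ≤ (C₀ + 1) * (ε / (C₀ + 1)) :=
                mul_le_mul_of_nonneg_right (by linarith) (by positivity)
            _ = ε := mul_div_cancel₀ _ (by positivity)
  -- uniform tightness (trivial, finite measure)
  have hut : UnifTight (fun j => ((T (u (k j)) : Y → ℝ))) ps μ := by
    intro ε hε
    refine ⟨Set.univ, measure_ne_top μ _, fun i => ?_⟩
    simp
  -- Vitali convergence
  have h_tendsto_ℒp :
      Tendsto (fun j => eLpNorm ((fun j => ((T (u (k j)) : Y → ℝ))) j - f) ps μ) atTop (𝓝 0) :=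
    tendsto_Lp_of_tendsto_ae hps1 hps_ne_top haef hf_s hui hut hf_ae
  have h_tendsto : Tendsto (fun j => F (u (k j))) atTop (𝓝 (hf_s.toLp f)) := by
    have := (Lp.tendsto_Lp_iff_tendsto_eLpNorm'' (fun j => ((T (u (k j)) : Y → ℝ)))
      (fun j => (Lp.memLp (T (u (k j)))).mono_exponent
        (ENNReal.ofReal_le_ofReal hsq.le)) f hf_s).2 h_tendsto_ℒp
    exact this
  refine ⟨hf_s.toLp f, ?_, k, hk, ?_⟩
  · exact mem_closure_of_tendsto h_tendsto
      (Eventually.of_forall fun j => Set.mem_image_of_mem F (huB (k j)))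
  · rw [tendsto_iff_dist_tendsto_zero]
    have hd : Tendsto (fun j : ℕ => dist (F (u (k j))) (hf_s.toLp f)) atTop (𝓝 0) :=
      tendsto_iff_dist_tendsto_zero.1 h_tendsto
    refine squeeze_zero (fun j => dist_nonneg)
      (g := fun j : ℕ => 1/(j+1) + dist (F (u (k j))) (hf_s.toLp f)) (fun j => ?_) ?_
    · calc dist ((x ∘ k) j) (hf_s.toLp f)
          ≤ dist (x (k j)) (F (u (k j))) + dist (F (u (k j))) (hf_s.toLp f) := dist_triangle _ _ _
        _ ≤ 1/(j+1) + dist (F (u (k j))) (hf_s.toLp f) := by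
            refine add_le_add_left (le_trans (hud (k j)).le ?_) _
            refine one_div_le_one_div_of_le (by positivity) ?_
            exact add_le_add_left (Nat.cast_le.2 hk.le_apply) 1
    · simpa using (tendsto_one_div_add_atTop_nhds_zero_nat).add hd
end

section
/- Let (Y, μ) be a finite measure space, let q > 2, let G be a real normed space, and let T : G → L^q(Y, μ) be a bounded injective linear map such that the induced map G → L^2(Y, μ) (the composition of T with the continuous inclusion L^q(Y,μ) ↪ L^2(Y,μ), which exists since μ is finite) is a compact operator. Then for every s with 1 ≤ s < q, the induced map G → L^s(Y, μ) is compact, i.e., it maps bounded subsets of G to relatively compact subsets of L^s(Y, μ). -/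
open MeasureTheory Filter Bornology
open scoped ENNReal

private lemma lyap {Y : Type*} [MeasurableSpace Y] (μ : Measure Y) {s q θ : ℝ}
    (hs : 0 < s) (hθ0 : 0 < θ) (hθ1 : θ < 1)
    (hp : 1 < 2 / (s * θ)) (hsum : s * θ / 2 + s * (1 - θ) / q = 1) (hq0 : 0 < q)
    {f : Y → ℝ} (hf : AEStronglyMeasurable f μ) :
    eLpNorm f (ENNReal.ofReal s) μ ≤
      eLpNorm f 2 μ ^ θ * eLpNorm f (ENNReal.ofReal q) μ ^ (1 - θ) := by
  have hsθ : 0 < s * θ := mul_pos hs hθ0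
  have hs1θ : 0 < s * (1 - θ) := mul_pos hs (by linarith)
  set F : Y → ℝ≥0∞ := fun x => (‖f x‖₊ : ℝ≥0∞) with hFdef
  have hF : AEMeasurable F μ := hf.enorm
  have conj : Real.HolderConjugate (2 / (s * θ)) (q / (s * (1 - θ))) := by
    rw [Real.holderConjugate_iff]
    constructor
    · exact hp
    · rw [inv_div, inv_div]
      field_simp
      field_simp at hsum
      linarith [hsum]
  have h1 : ∫⁻ x, F x ^ s ∂μ ≤
      (∫⁻ x, F x ^ (2 : ℝ) ∂μ) ^ (s * θ / 2) * (∫⁻ x, F x ^ q ∂μ) ^ (s * (1 - θ) / q) := by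
    have holder := ENNReal.lintegral_mul_le_Lp_mul_Lq μ conj
      (hF.pow_const (s * θ)) (hF.pow_const (s * (1 - θ)))
    calc ∫⁻ x, F x ^ s ∂μ
        = ∫⁻ x, ((fun x => F x ^ (s * θ)) * fun x => F x ^ (s * (1 - θ))) x ∂μ := by
          apply lintegral_congr; intro x
          simp only [Pi.mul_apply]
          rw [← ENNReal.rpow_add_of_nonneg _ _ hsθ.le hs1θ.le]
          ring_nf
      _ ≤ (∫⁻ x, (F x ^ (s * θ)) ^ (2 / (s * θ)) ∂μ) ^ (1 / (2 / (s * θ))) *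
          (∫⁻ x, (F x ^ (s * (1 - θ))) ^ (q / (s * (1 - θ))) ∂μ) ^ (1 / (q / (s * (1 - θ)))) :=
          holder
      _ = (∫⁻ x, F x ^ (2 : ℝ) ∂μ) ^ (s * θ / 2) * (∫⁻ x, F x ^ q ∂μ) ^ (s * (1 - θ) / q) := by
          rw [one_div_div, one_div_div]
          congr 1
          · congr 1
            apply lintegral_congr; intro x
            rw [← ENNReal.rpow_mul]
            congr 1
            field_simp
          · congr 1
            apply lintegral_congr; intro x
            rw [← ENNReal.rpow_mul]
            congr 1
            field_simp
            exact div_self (by linarith)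
  have he_s : eLpNorm f (ENNReal.ofReal s) μ = (∫⁻ x, F x ^ s ∂μ) ^ (1 / s) := by
    rw [eLpNorm_eq_lintegral_rpow_enorm_toReal (by simp [hs]) ENNReal.ofReal_ne_top]
    rw [ENNReal.toReal_ofReal hs.le]
    rfl
  have he_2 : eLpNorm f 2 μ = (∫⁻ x, F x ^ (2 : ℝ) ∂μ) ^ (1 / (2 : ℝ)) := by
    rw [eLpNorm_eq_lintegral_rpow_enorm_toReal (by norm_num) (by norm_num)]
    norm_num
    rfl
  have he_q : eLpNorm f (ENNReal.ofReal q) μ = (∫⁻ x, F x ^ q ∂μ) ^ (1 / q) := by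
    rw [eLpNorm_eq_lintegral_rpow_enorm_toReal (by simp [hq0]) ENNReal.ofReal_ne_top]
    rw [ENNReal.toReal_ofReal hq0.le]
    rfl
  rw [he_s, he_2, he_q]
  calc (∫⁻ x, F x ^ s ∂μ) ^ (1 / s)
      ≤ ((∫⁻ x, F x ^ (2 : ℝ) ∂μ) ^ (s * θ / 2) *
          (∫⁻ x, F x ^ q ∂μ) ^ (s * (1 - θ) / q)) ^ (1 / s) :=
        ENNReal.rpow_le_rpow h1 (by positivity)
    _ = ((∫⁻ x, F x ^ (2 : ℝ) ∂μ) ^ (1 / (2 : ℝ))) ^ θ *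
        ((∫⁻ x, F x ^ q ∂μ) ^ (1 / q)) ^ (1 - θ) := by
        rw [ENNReal.mul_rpow_of_nonneg _ _ (by positivity),
          ← ENNReal.rpow_mul, ← ENNReal.rpow_mul, ← ENNReal.rpow_mul, ← ENNReal.rpow_mul]
        congr 1
        · congr 1
          field_simp
        · congr 1
          field_simp

private lemma key_bound {Y : Type*} [MeasurableSpace Y] (μ : Measure Y) [IsFiniteMeasure μ]
    {s q : ℝ} (hs1 : 1 ≤ s) (hsq : s < q) (hq : 2 < q) :
    ∃ C θ : ℝ, 0 ≤ C ∧ 0 < θ ∧ θ ≤ 1 ∧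
      ∀ f : Y → ℝ, MemLp f (ENNReal.ofReal q) μ →
        (eLpNorm f (ENNReal.ofReal s) μ).toReal ≤
          C * (eLpNorm f 2 μ).toReal ^ θ *
            ((eLpNorm f (ENNReal.ofReal q) μ).toReal + 1) ^ (1 - θ) := by
  have hs0 : 0 < s := lt_of_lt_of_le one_pos hs1
  have hq0 : 0 < q := by linarith
  have h2q : (2 : ℝ≥0∞) ≤ ENNReal.ofReal q := by
    simpa using ENNReal.ofReal_le_ofReal hq.le
  rcases le_or_gt s 2 with hs2 | hs2
  · -- s ≤ 2 : monotonicity of Lp norms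
    refine ⟨((μ Set.univ) ^ (1 / s - 1 / 2)).toReal, 1, ENNReal.toReal_nonneg, one_pos,
      le_refl 1, fun f hf => ?_⟩
    have hf2 : MemLp f 2 μ := hf.mono_exponent h2q
    have hle : eLpNorm f (ENNReal.ofReal s) μ ≤
        eLpNorm f 2 μ * μ Set.univ ^ (1 / s - 1 / 2) := by
      have := eLpNorm_le_eLpNorm_mul_rpow_measure_univ
        (p := ENNReal.ofReal s) (q := (2 : ℝ≥0∞)) (μ := μ)
        (by simpa [ENNReal.ofReal_ofNat] using ENNReal.ofReal_le_ofReal hs2)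
        hf.1
      simpa [ENNReal.toReal_ofReal hs0.le] using this
    have hfin : eLpNorm f 2 μ * μ Set.univ ^ (1 / s - 1 / 2) ≠ ∞ := by
      apply ENNReal.mul_ne_top hf2.2.ne
      refine ENNReal.rpow_ne_top_of_nonneg ?_ (measure_ne_top μ _)
      have : (1:ℝ)/2 ≤ 1/s := one_div_le_one_div_of_le hs0 hs2
      linarith
    calc (eLpNorm f (ENNReal.ofReal s) μ).toReal
        ≤ (eLpNorm f 2 μ * μ Set.univ ^ (1 / s - 1 / 2)).toReal :=
          ENNReal.toReal_mono hfin hle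
      _ = (eLpNorm f 2 μ).toReal * ((μ Set.univ) ^ (1 / s - 1 / 2)).toReal :=
          ENNReal.toReal_mul
      _ ≤ ((μ Set.univ) ^ (1 / s - 1 / 2)).toReal * (eLpNorm f 2 μ).toReal ^ (1:ℝ) * 1 := by
          rw [Real.rpow_one]; ring_nf; exact le_refl _
      _ ≤ _ := by
          have h1 : ((eLpNorm f (ENNReal.ofReal q) μ).toReal + 1) ^ (1 - (1:ℝ)) = 1 := by
            norm_num
          rw [h1]
  · -- 2 < s < q : interpolation
    set θ : ℝ := (1 / s - 1 / q) / (1 / 2 - 1 / q) with hθdef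
    have hden : 0 < 1 / 2 - 1 / q := by
      have : 1 / q < 1 / 2 := by
        apply one_div_lt_one_div_of_lt <;> linarith
      linarith
    have hnum : 0 < 1 / s - 1 / q := by
      have : 1 / q < 1 / s := by
        apply one_div_lt_one_div_of_lt <;> linarith
      linarith
    have hθ0 : 0 < θ := div_pos hnum hden
    have hθ1 : θ < 1 := by
      rw [hθdef, div_lt_one hden]
      have : 1 / s < 1 / 2 := by
        apply one_div_lt_one_div_of_lt <;> linarith
      linarith
    have hden' : (1:ℝ) / 2 - 1 / q ≠ 0 := ne_of_gt hden
    have hkey : θ * (1 / 2 - 1 / q) = 1 / s - 1 / q := by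
      rw [hθdef]; exact div_mul_cancel₀ _ hden'
    have hsum : s * θ / 2 + s * (1 - θ) / q = 1 := by
      have e1 : s * θ / 2 + s * (1 - θ) / q = s * (θ * (1 / 2 - 1 / q)) + s * (1 / q) := by
        field_simp
        ring
      rw [e1, hkey, mul_sub, mul_one_div, div_self hs0.ne']
      field_simp
      ring
    have hp : 1 < 2 / (s * θ) := by
      rw [lt_div_iff₀ (mul_pos hs0 hθ0), one_mul]
      rw [hθdef, ← mul_div_assoc, div_lt_iff₀ hden]
      have h1 : s * (1 / s - 1 / q) = 1 - s / q := by
        field_simp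
      have h2 : 2 * ((1:ℝ) / 2 - 1 / q) = 1 - 2 / q := by
        field_simp
      rw [h1, h2]
      have h3 : 2 / q < s / q := (div_lt_div_iff_of_pos_right hq0).2 hs2
      linarith
    refine ⟨1, θ, zero_le_one, hθ0, hθ1.le, fun f hf => ?_⟩
    have hf2 : MemLp f 2 μ := hf.mono_exponent h2q
    have hle := lyap μ hs0 hθ0 hθ1 hp hsum hq0 hf.1
    have hfin : eLpNorm f 2 μ ^ θ * eLpNorm f (ENNReal.ofReal q) μ ^ (1 - θ) ≠ ∞ :=
      ENNReal.mul_ne_top (ENNReal.rpow_ne_top_of_nonneg hθ0.le hf2.2.ne)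
        (ENNReal.rpow_ne_top_of_nonneg (by linarith) hf.2.ne)
    calc (eLpNorm f (ENNReal.ofReal s) μ).toReal
        ≤ (eLpNorm f 2 μ ^ θ * eLpNorm f (ENNReal.ofReal q) μ ^ (1 - θ)).toReal :=
          ENNReal.toReal_mono hfin hle
      _ = (eLpNorm f 2 μ).toReal ^ θ * (eLpNorm f (ENNReal.ofReal q) μ).toReal ^ (1 - θ) := by
          rw [ENNReal.toReal_mul, ENNReal.toReal_rpow, ENNReal.toReal_rpow]
      _ ≤ 1 * (eLpNorm f 2 μ).toReal ^ θ *
            ((eLpNorm f (ENNReal.ofReal q) μ).toReal + 1) ^ (1 - θ) := by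
          rw [one_mul]
          apply mul_le_mul_of_nonneg_left _ (by positivity)
          exact Real.rpow_le_rpow ENNReal.toReal_nonneg (by linarith) (by linarith)

/-- Variant of the abstract Rellich–Kondrachov theorem used in the paper
(cf. Proposition 2.6 / Proposition 2.7): if `T : G → L^q(Y, μ)` is a bounded injective
linear map on a finite measure space with `q > 2`, and the induced map `G → L²(Y, μ)`
is a compact operator, then for every `1 ≤ s < q` the induced map `G → L^s(Y, μ)`
is compact. -/
theorem stmt_1
    {Y : Type*} [MeasurableSpace Y] (μ : Measure Y) [IsFiniteMeasure μ]
    (q : ℝ) (hq : 2 < q) [Fact (1 ≤ ENNReal.ofReal q)]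
    {G : Type*} [NormedAddCommGroup G] [NormedSpace ℝ G]
    (T : G →L[ℝ] Lp ℝ (ENNReal.ofReal q) μ)
    (hT_inj : Function.Injective T)
    (h2cpt : ∀ B : Set G, IsBounded B →
      IsCompact (closure ((fun u : G =>
        ((Lp.memLp (T u)).mono_exponent
          (show (2 : ℝ≥0∞) ≤ ENNReal.ofReal q by
            simpa using ENNReal.ofReal_le_ofReal hq.le)).toLp
          (T u : Y → ℝ)) '' B)))
    (s : ℝ) (hs1 : 1 ≤ s) (hsq : s < q) [Fact (1 ≤ ENNReal.ofReal s)] :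
    ∀ B : Set G, IsBounded B →
      IsCompact (closure ((fun u : G =>
        ((Lp.memLp (T u)).mono_exponent
          (ENNReal.ofReal_le_ofReal hsq.le)).toLp (T u : Y → ℝ)) '' B)) := by
  intro B hB
  classical
  set F2 : G → Lp ℝ 2 μ := fun u : G =>
    ((Lp.memLp (T u)).mono_exponent
      (show (2 : ℝ≥0∞) ≤ ENNReal.ofReal q by
        simpa using ENNReal.ofReal_le_ofReal hq.le)).toLp (T u : Y → ℝ) with hF2def
  set Fs : G → Lp ℝ (ENNReal.ofReal s) μ := fun u : G =>
    ((Lp.memLp (T u)).mono_exponent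
      (ENNReal.ofReal_le_ofReal hsq.le)).toLp (T u : Y → ℝ) with hFsdef
  rcases B.eq_empty_or_nonempty with rfl | ⟨u₀, hu₀⟩
  · rw [Set.image_empty, closure_empty]
    exact isCompact_empty
  obtain ⟨R, hR⟩ := isBounded_iff_forall_norm_le.1 hB
  obtain ⟨C, θ, hC, hθ0, hθ1, hbound⟩ := key_bound μ hs1 hsq hq
  -- distance identities
  have hdist2 : ∀ u v : G, dist (F2 u) (F2 v) =
      (eLpNorm ((T u : Y → ℝ) - (T v : Y → ℝ)) 2 μ).toReal := by
    intro u v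
    rw [dist_eq_norm, hF2def]
    simp only
    rw [← MemLp.toLp_sub, Lp.norm_toLp]
  have hdists : ∀ u v : G, dist (Fs u) (Fs v) =
      (eLpNorm ((T u : Y → ℝ) - (T v : Y → ℝ)) (ENNReal.ofReal s) μ).toReal := by
    intro u v
    rw [dist_eq_norm, hFsdef]
    simp only
    rw [← MemLp.toLp_sub, Lp.norm_toLp]
  have hdistq : ∀ u v : G,
      (eLpNorm ((T u : Y → ℝ) - (T v : Y → ℝ)) (ENNReal.ofReal q) μ).toReal =
        dist (T u) (T v) := by
    intro u v
    rw [dist_eq_norm, Lp.norm_def]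
    congr 1
    apply eLpNorm_congr_ae
    exact (Lp.coeFn_sub (T u) (T v)).symm
  -- uniform bound in L^q
  set M : ℝ := ‖T‖ * (R + R) with hMdef
  have hTM : ∀ u ∈ B, ∀ v ∈ B, dist (T u) (T v) ≤ M := by
    intro u hu v hv
    rw [dist_eq_norm, ← map_sub]
    calc ‖T (u - v)‖ ≤ ‖T‖ * ‖u - v‖ := T.le_opNorm _
      _ ≤ ‖T‖ * (R + R) := by
          apply mul_le_mul_of_nonneg_left _ (norm_nonneg T)
          calc ‖u - v‖ ≤ ‖u‖ + ‖v‖ := norm_sub_le _ _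
            _ ≤ R + R := add_le_add (hR u hu) (hR v hv)
  have hM0 : 0 ≤ M := le_trans dist_nonneg (hTM u₀ hu₀ u₀ hu₀)
  set K : ℝ := C * (M + 1) ^ (1 - θ) with hKdef
  have hK0 : 0 ≤ K := mul_nonneg hC (Real.rpow_nonneg (by linarith) _)
  -- total boundedness
  apply TotallyBounded.isCompact_of_isClosed _ isClosed_closure
  apply TotallyBounded.closure
  rw [Metric.totallyBounded_iff]
  intro ε hε
  set δ : ℝ := (ε / (K + 1)) ^ (1 / θ) with hδdef
  have hδ0 : 0 < δ := Real.rpow_pos_of_pos (div_pos hε (by linarith)) _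
  have htb2 : TotallyBounded (F2 '' B) :=
    ((h2cpt B hB).totallyBounded).subset subset_closure
  obtain ⟨t, htsub, htfin, htcov⟩ :=
    totallyBounded_iff_subset.1 htb2 _ (Metric.dist_mem_uniformity hδ0)
  have hchoice : ∀ y : Lp ℝ 2 μ, ∃ u : G, y ∈ F2 '' B → u ∈ B ∧ F2 u = y := by
    intro y
    by_cases h : y ∈ F2 '' B
    · rcases h with ⟨u, hu, he⟩
      exact ⟨u, fun _ => ⟨hu, he⟩⟩
    · exact ⟨0, fun h' => absurd h' h⟩
  choose g hg using hchoice
  refine ⟨Fs '' (g '' t), (htfin.image g).image Fs, ?_⟩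
  rintro x ⟨u, huB, rfl⟩
  have hcov := htcov ⟨u, huB, rfl⟩
  rw [Set.mem_iUnion₂] at hcov
  obtain ⟨y, hyt, hdy⟩ := hcov
  have hy' := hg y (htsub hyt)
  set v : G := g y with hvdef
  have hvB : v ∈ B := hy'.1
  have hF2v : F2 v = y := hy'.2
  rw [Set.mem_iUnion₂]
  refine ⟨Fs v, ⟨v, ⟨y, hyt, rfl⟩, rfl⟩, ?_⟩
  rw [Metric.mem_ball, hdists u v]
  have hmem : MemLp ((T u : Y → ℝ) - (T v : Y → ℝ)) (ENNReal.ofReal q) μ :=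
    (Lp.memLp (T u)).sub (Lp.memLp (T v))
  have hbd := hbound _ hmem
  have hd2 : (eLpNorm ((T u : Y → ℝ) - (T v : Y → ℝ)) 2 μ).toReal < δ := by
    rw [← hdist2 u v] at *
    rw [← hF2v] at hdy
    exact hdy
  have hdq : (eLpNorm ((T u : Y → ℝ) - (T v : Y → ℝ)) (ENNReal.ofReal q) μ).toReal ≤ M := by
    rw [hdistq u v]
    exact hTM u huB v hvB
  have he2nn : (0:ℝ) ≤ (eLpNorm ((T u : Y → ℝ) - (T v : Y → ℝ)) 2 μ).toReal :=
    ENNReal.toReal_nonneg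
  calc (eLpNorm ((T u : Y → ℝ) - (T v : Y → ℝ)) (ENNReal.ofReal s) μ).toReal
      ≤ C * (eLpNorm ((T u : Y → ℝ) - (T v : Y → ℝ)) 2 μ).toReal ^ θ *
        ((eLpNorm ((T u : Y → ℝ) - (T v : Y → ℝ)) (ENNReal.ofReal q) μ).toReal + 1) ^ (1 - θ) :=
        hbd
    _ ≤ C * (eLpNorm ((T u : Y → ℝ) - (T v : Y → ℝ)) 2 μ).toReal ^ θ * (M + 1) ^ (1 - θ) := by
        apply mul_le_mul_of_nonneg_left _ (by positivity)
        exact Real.rpow_le_rpow (by positivity) (by linarith) (by linarith)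
    _ = K * (eLpNorm ((T u : Y → ℝ) - (T v : Y → ℝ)) 2 μ).toReal ^ θ := by
        rw [hKdef]; ring
    _ ≤ (K + 1) * (eLpNorm ((T u : Y → ℝ) - (T v : Y → ℝ)) 2 μ).toReal ^ θ := by
        apply mul_le_mul_of_nonneg_right (by linarith) (by positivity)
    _ < (K + 1) * δ ^ θ := by
        apply mul_lt_mul_of_pos_left _ (by linarith)
        exact Real.rpow_lt_rpow he2nn hd2 hθ0
    _ = ε := by
        rw [hδdef, ← Real.rpow_mul (div_nonneg hε.le (by linarith)),
          one_div_mul_cancel hθ0.ne', Real.rpow_one]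
        field_simp
end

section
/- Let V be a reflexive real Banach space and let E : V → ℝ be a C¹ functional whose Fréchet derivative at u is denoted DE(u) ∈ V*. Assume: (1) every Palais–Smale sequence for E is bounded in V; (2) for every u ∈ V one can decompose DE(u) = L(u) + K(u), where L : V → V* is a fixed bounded invertible linear map (a continuous linear bijection with continuous inverse) and K : V → V* maps bounded subsets of V to relatively compact subsets of V*. Then E satisfies the Palais–Smale condition. -/
open Filter Bornology

/-- Sufficient criterion for the Palais–Smale condition (Proposition 2.10 of the paper,
cf. Struwe): on a reflexive real Banach space `V`, if every Palais–Smale sequence of a `C¹`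
functional `E` is bounded, and `DE = L + K` with `L : V → V*` a bounded invertible linear
map and `K` mapping bounded sets to relatively compact sets, then `E` satisfies the
Palais–Smale condition. -/
theorem stmt_3 {V : Type*} [NormedAddCommGroup V] [NormedSpace ℝ V] [CompleteSpace V]
    (hrefl : Function.Surjective ⇑(NormedSpace.inclusionInDoubleDual ℝ V))
    (E : V → ℝ) (hE : ContDiff ℝ 1 E)
    (hbdd : ∀ u : ℕ → V,
      (∃ C : ℝ, ∀ m, |E (u m)| ≤ C) →
      Tendsto (fun m => ‖fderiv ℝ E (u m)‖) atTop (nhds 0) →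
      IsBounded (Set.range u))
    (L : V ≃L[ℝ] (V →L[ℝ] ℝ)) (K : V → (V →L[ℝ] ℝ))
    (hdecomp : ∀ u : V, fderiv ℝ E u = L u + K u)
    (hK : ∀ B : Set V, IsBounded B → IsCompact (closure (K '' B))) :
    ∀ u : ℕ → V,
      (∃ C : ℝ, ∀ m, |E (u m)| ≤ C) →
      Tendsto (fun m => ‖fderiv ℝ E (u m)‖) atTop (nhds 0) →
      ∃ (k : ℕ → ℕ) (v : V), StrictMono k ∧ Tendsto (u ∘ k) atTop (nhds v) := by
  intro u hC hD
  have hb : IsBounded (Set.range u) := hbdd u hC hD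
  have hcomp := hK (Set.range u) hb
  have hmem : ∀ n, K (u n) ∈ closure (K '' Set.range u) := fun n =>
    subset_closure ⟨u n, Set.mem_range_self n, rfl⟩
  obtain ⟨w, -, φ, hφ, hwlim⟩ := hcomp.tendsto_subseq hmem
  refine ⟨φ, L.symm (-w), hφ, ?_⟩
  have hD0 : Tendsto (fun n => fderiv ℝ E (u (φ n))) atTop (nhds 0) := by
    rw [tendsto_zero_iff_norm_tendsto_zero]
    exact hD.comp hφ.tendsto_atTop
  have h1 : Tendsto (fun n => fderiv ℝ E (u (φ n)) - K (u (φ n))) atTop (nhds (0 - w)) :=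
    hD0.sub hwlim
  have h2 : Tendsto (fun n => L.symm (fderiv ℝ E (u (φ n)) - K (u (φ n)))) atTop
      (nhds (L.symm (0 - w))) := (L.symm.continuous.tendsto _).comp h1
  have heq : ∀ n, L.symm (fderiv ℝ E (u (φ n)) - K (u (φ n))) = u (φ n) := by
    intro n
    rw [hdecomp]
    simp
  simpa [heq, Function.comp_def, zero_sub] using h2
end

section
/- (Mountain Pass Theorem) Let V be a real Banach space and let E : V → ℝ be a C¹ functional satisfying the Palais–Smale condition. Assume: (1) E(0) = 0; (2) there exist ρ > 0 and α > 0 such that E(u) ≥ α for every u ∈ V with ‖u‖_V = ρ; (3) there exists u₁ ∈ V with ‖u₁‖_V > ρ and E(u₁) ≤ 0. Define P = { l ∈ C([0,1], V) : l(0) = 0, l(1) = u₁ } and c = inf_{l ∈ P} sup_{t ∈ [0,1]} E(l(t)). Then c ≥ α and c is a critical value of E, i.e., there exists u ∈ V with E(u) = c and DE(u) = 0. -/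
open Filter Metric Set Topology

/-- Weak form of Ekeland's variational principle. -/
theorem ekeland_weak {X : Type*} [MetricSpace X] [CompleteSpace X]
    (f : X → ℝ) (hlsc : LowerSemicontinuous f) (B : ℝ) (hB : ∀ x, B ≤ f x)
    (ε : ℝ) (hε : 0 < ε) (x₀ : X) :
    ∃ x : X, f x ≤ f x₀ ∧ ∀ y, f x ≤ f y + ε * dist x y := by
  set r : X → X → Prop := fun y x => f y + ε * dist x y ≤ f x with hr
  have hrefl : ∀ x, r x x := by intro x; simp [hr]
  have htrans : ∀ z y x, r z y → r y x → r z x := by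
    intro z y x h1 h2
    have := dist_triangle x y z
    simp only [hr] at *
    nlinarith [dist_nonneg (x := x) (y := y)]
  have hstep : ∀ x : X, ∀ n : ℕ, ∃ y : X, r y x ∧
      f y ≤ sInf (f '' {z | r z x}) + (1/2)^n := by
    intro x n
    have hne : (f '' {z | r z x}).Nonempty := ⟨f x, x, hrefl x, rfl⟩
    obtain ⟨b, hb, hble⟩ := Real.lt_sInf_add_pos hne (show (0:ℝ) < (1/2)^n by positivity)
    obtain ⟨z, hz, rfl⟩ := hb
    exact ⟨z, hz, hble.le⟩
  choose g hg1 hg2 using hstep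
  let u : ℕ → X := fun n => Nat.rec x₀ (fun n x => g x n) n
  have hu0 : u 0 = x₀ := rfl
  have husucc : ∀ n, u (n+1) = g (u n) n := fun n => rfl
  have hstep1 : ∀ n, r (u (n+1)) (u n) := fun n => hg1 (u n) n
  have hchain : ∀ n m, n ≤ m → r (u m) (u n) := by
    intro n m h
    induction m with
    | zero => have : n = 0 := Nat.le_zero.mp h; subst this; exact hrefl _
    | succ m ih =>
      rcases Nat.lt_or_ge n (m+1) with h' | h'
      · exact htrans _ _ _ (hstep1 m) (ih (Nat.lt_succ_iff.mp h'))
      · have : n = m + 1 := le_antisymm h h'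
        subst this; exact hrefl _
  have hmono : ∀ n m, n ≤ m → f (u m) ≤ f (u n) := by
    intro n m h
    have := hchain n m h
    simp only [hr] at this
    nlinarith [dist_nonneg (x := u n) (y := u m), hε]
  have hbdd : BddBelow (range fun n => f (u n)) := ⟨B, by rintro _ ⟨n, rfl⟩; exact hB _⟩
  set L := ⨅ n, f (u n) with hL
  have hfL : Tendsto (fun n => f (u n)) atTop (𝓝 L) :=
    tendsto_atTop_ciInf (fun n m h => hmono n m h) hbdd
  have hLle : ∀ n, L ≤ f (u n) := fun n => ciInf_le hbdd n
  have hdist : ∀ n m, n ≤ m → ε * dist (u n) (u m) ≤ f (u n) - f (u m) := by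
    intro n m h
    have := hchain n m h
    simp only [hr] at this
    linarith
  have hcauchy : CauchySeq u := by
    apply cauchySeq_of_le_tendsto_0 (fun N => 2 * (f (u N) - L) / ε)
    · intro n m N hn hm
      have h1 := hdist N n hn
      have h2 := hdist N m hm
      have h3 := dist_triangle (u n) (u N) (u m)
      have h4 := hLle n
      have h5 := hLle m
      rw [dist_comm (u n) (u N)] at h3
      rw [le_div_iff₀ hε]
      nlinarith
    · have h0 : Tendsto (fun N => f (u N) - L) atTop (𝓝 (L - L)) :=
        hfL.sub tendsto_const_nhds
      rw [sub_self] at h0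
      have := (h0.const_mul 2).div_const ε
      simpa using this
  obtain ⟨x, hx⟩ := cauchySeq_tendsto_of_complete hcauchy
  have hrx : ∀ n, r x (u n) := by
    intro n
    have key : ∀ b < f x, b + ε * dist (u n) x ≤ f (u n) := by
      intro b hb
      have hev : ∀ᶠ m in atTop, b < f (u m) := hx.eventually (hlsc x b hb)
      have hev2 : ∀ᶠ m : ℕ in atTop, b + ε * dist (u n) (u m) ≤ f (u n) := by
        filter_upwards [hev, eventually_ge_atTop n] with m h1 h2
        have := hdist n m h2
        linarith
      have hlim : Tendsto (fun m => b + ε * dist (u n) (u m)) atTop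
          (𝓝 (b + ε * dist (u n) x)) :=
        tendsto_const_nhds.add ((tendsto_const_nhds.dist hx).const_mul ε)
      exact le_of_tendsto hlim hev2
    simp only [hr]
    by_contra hcon
    push_neg at hcon
    have hb : (f (u n) - ε * dist (u n) x + f x) / 2 < f x := by linarith
    have := key _ hb
    linarith
  refine ⟨x, ?_, ?_⟩
  · have := hrx 0
    rw [hu0] at this
    simp only [hr] at this
    nlinarith [dist_nonneg (x := x₀) (y := x)]
  · intro y
    by_contra hcon
    push_neg at hcon
    have hry : ∀ n, r y (u n) := fun n =>
      htrans _ _ _ (by simp only [hr]; linarith) (hrx n)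
    have hf1 : ∀ n : ℕ, f (u (n+1)) ≤ f y + (1/2)^n := by
      intro n
      have h2 := hg2 (u n) n
      have hIle : sInf (f '' {z | r z (u n)}) ≤ f y :=
        csInf_le ⟨B, by rintro _ ⟨z, _, rfl⟩; exact hB z⟩ ⟨y, hry n, rfl⟩
      rw [husucc]
      linarith
    have hfx_le : f x ≤ f y := by
      have h3 : ∀ n : ℕ, f x ≤ f y + (1/2)^n := by
        intro n
        have ha := hrx (n+1)
        simp only [hr] at ha
        have hb := hf1 n
        nlinarith [dist_nonneg (x := u (n+1)) (y := x)]
      have hlim : Tendsto (fun n : ℕ => f y + (1/2)^n) atTop (𝓝 (f y + 0)) :=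
        tendsto_const_nhds.add (tendsto_pow_atTop_nhds_zero_of_lt_one (by norm_num) (by norm_num))
      rw [add_zero] at hlim
      exact ge_of_tendsto hlim (Eventually.of_forall h3)
    nlinarith [dist_nonneg (x := x) (y := y)]



set_option maxHeartbeats 2000000 in
theorem mp_key {V : Type*} [NormedAddCommGroup V] [NormedSpace ℝ V]
    (E : V → ℝ) (hE : ContDiff ℝ 1 E)
    (l : C(Set.Icc (0:ℝ) 1, V)) (Φl ε : ℝ) (hε : 0 < ε) (hΦpos : 0 < Φl)
    (hub : ∀ s, E (l s) ≤ Φl)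
    (hattain : ∃ s, E (l s) = Φl)
    (hend0 : E (l ⟨0, Set.left_mem_Icc.mpr zero_le_one⟩) ≤ 0)
    (hend1 : E (l ⟨1, Set.right_mem_Icc.mpr zero_le_one⟩) ≤ 0)
    (hek : ∀ l' : C(Set.Icc (0:ℝ) 1, V),
      l' ⟨0, Set.left_mem_Icc.mpr zero_le_one⟩ = l ⟨0, Set.left_mem_Icc.mpr zero_le_one⟩ →
      l' ⟨1, Set.right_mem_Icc.mpr zero_le_one⟩ = l ⟨1, Set.right_mem_Icc.mpr zero_le_one⟩ →
      ∀ d, 0 ≤ d → (∀ s, dist (l' s) (l s) ≤ d) → ∀ b, (∀ s, E (l' s) ≤ b) → Φl ≤ b + ε * d) :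
    ∃ s, E (l s) = Φl ∧ ‖fderiv ℝ E (l s)‖ ≤ 2 * ε := by
  by_contra hcon
  push_neg at hcon
  set D := fderiv ℝ E with hDdef
  have hDcont : Continuous D := hE.continuous_fderiv one_ne_zero
  have hEcont : Continuous E := hE.continuous
  set t0 : Set.Icc (0:ℝ) 1 := ⟨0, Set.left_mem_Icc.mpr zero_le_one⟩ with ht0
  set t1 : Set.Icc (0:ℝ) 1 := ⟨1, Set.right_mem_Icc.mpr zero_le_one⟩ with ht1
  set M : Set (Set.Icc (0:ℝ) 1) := {s | E (l s) = Φl} with hMdef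
  have hMne : M.Nonempty := hattain
  have hMclosed : IsClosed M := isClosed_eq (hEcont.comp l.continuous) continuous_const
  have hMcompact : IsCompact M := hMclosed.isCompact
  have hv : ∀ t ∈ M, ∃ w : V, ‖w‖ ≤ 1 ∧ D (l t) w < -(2*ε) := by
    intro t ht
    have h1 : 2 * ε < ‖D (l t)‖ := hcon t ht
    obtain ⟨w, hw1, hw2⟩ := ContinuousLinearMap.exists_lt_apply_of_lt_opNorm (D (l t)) h1
    rcases le_or_gt 0 (D (l t) w) with h | h
    · refine ⟨-w, by simpa using hw1.le, ?_⟩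
      rw [map_neg]
      rw [Real.norm_eq_abs, abs_of_nonneg h] at hw2; linarith
    · exact ⟨w, hw1.le, by rw [Real.norm_eq_abs, abs_of_neg h] at hw2; linarith⟩
  choose! v hv1 hv2 using hv
  set U : Set.Icc (0:ℝ) 1 → Set (Set.Icc (0:ℝ) 1) :=
    fun t => {s | Φl / 2 < E (l s) ∧ D (l s) (v t) < -(2*ε)} with hUdef
  have hUopen : ∀ t, IsOpen (U t) := by
    intro t
    apply IsOpen.inter
    · exact isOpen_lt continuous_const (hEcont.comp l.continuous)
    · exact isOpen_lt ((hDcont.comp l.continuous).clm_apply continuous_const) continuous_const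
  have hMU : ∀ t ∈ M, t ∈ U t := fun t ht => ⟨by rw [show E (l t) = Φl from ht]; linarith, hv2 t ht⟩
  have hUend0 : ∀ t, t0 ∉ U t := by
    intro t hmem
    have := hmem.1
    simp only [ht0] at this
    linarith
  have hUend1 : ∀ t, t1 ∉ U t := by
    intro t hmem
    have := hmem.1
    simp only [ht1] at this
    linarith
  have hcover : M ⊆ ⋃ t : M, U t.1 := fun t ht => Set.mem_iUnion.mpr ⟨⟨t, ht⟩, hMU t ht⟩
  obtain ⟨T, hT⟩ := hMcompact.elim_finite_subcover (fun i : M => U i.1) (fun i => hUopen _) hcover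
  set φ : M → Set.Icc (0:ℝ) 1 → ℝ := fun i s => infDist s (U i.1)ᶜ with hφdef
  have hφcont : ∀ i, Continuous (φ i) := fun i => continuous_infDist_pt _
  have hφnonneg : ∀ i s, 0 ≤ φ i s := fun i s => infDist_nonneg
  have hφpos : ∀ i s, s ∈ U i.1 → 0 < φ i s := by
    intro i s hs
    rw [← (hUopen i.1).isClosed_compl.notMem_iff_infDist_pos ⟨t0, hUend0 i.1⟩]
    simpa using hs
  have hφzero : ∀ i s, s ∉ U i.1 → φ i s = 0 := fun i s hs => infDist_zero_of_mem hs
  set ψ : Set.Icc (0:ℝ) 1 → ℝ := fun s => ∑ i ∈ T, φ i s with hψdef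
  have hψcont : Continuous ψ := continuous_finset_sum _ (fun i _ => hφcont i)
  have hψnonneg : ∀ s, 0 ≤ ψ s := fun s => Finset.sum_nonneg fun i _ => hφnonneg i s
  set UU : Set (Set.Icc (0:ℝ) 1) := ⋃ i ∈ T, U i.1 with hUUdef
  have hUUopen : IsOpen UU := isOpen_biUnion (fun i _ => hUopen i.1)
  have ht0UU : t0 ∉ UU := by
    simp only [hUUdef, Set.mem_iUnion]
    rintro ⟨i, _, hmem⟩
    exact hUend0 i.1 hmem
  have ht1UU : t1 ∉ UU := by
    simp only [hUUdef, Set.mem_iUnion]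
    rintro ⟨i, _, hmem⟩
    exact hUend1 i.1 hmem
  have hUUc_ne : (UUᶜ).Nonempty := ⟨t0, ht0UU⟩
  have hMUU : M ⊆ UU := by
    intro s hs
    have := hT hs
    simpa [hUUdef] using this
  have hψpos : ∀ s ∈ M, 0 < ψ s := by
    intro s hs
    have hmem := hMUU hs
    simp only [hUUdef, Set.mem_iUnion] at hmem
    obtain ⟨i, hiT, hiU⟩ := hmem
    exact lt_of_lt_of_le (hφpos i s hiU) (Finset.single_le_sum (fun j _ => hφnonneg j s) hiT)
  set g : Set.Icc (0:ℝ) 1 → V := fun s => ∑ i ∈ T, φ i s • v i.1 with hgdef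
  have hgcont : Continuous g := continuous_finset_sum _ (fun i _ => (hφcont i).smul continuous_const)
  have hgnorm : ∀ s, ‖g s‖ ≤ ψ s := by
    intro s
    calc ‖∑ i ∈ T, φ i s • v i.1‖ ≤ ∑ i ∈ T, ‖φ i s • v i.1‖ := norm_sum_le _ _
    _ ≤ ∑ i ∈ T, φ i s := by
        apply Finset.sum_le_sum
        intro i hi
        rw [norm_smul, Real.norm_eq_abs, abs_of_nonneg (hφnonneg i s)]
        nlinarith [hφnonneg i s, hv1 i.1 i.2, norm_nonneg (v i.1)]
  set aa : Set.Icc (0:ℝ) 1 → ℝ := fun s => infDist s UUᶜ with haadef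
  set bb : Set.Icc (0:ℝ) 1 → ℝ := fun s => infDist s M with hbbdef
  have haaposUU : ∀ s ∈ UU, 0 < aa s := by
    intro s hs
    rw [haadef]
    rw [← hUUopen.isClosed_compl.notMem_iff_infDist_pos hUUc_ne]
    simpa using hs
  have hdenom : ∀ s, 0 < aa s + bb s := by
    intro s
    by_contra hle
    push_neg at hle
    have ha0 : aa s = 0 := le_antisymm (by have := infDist_nonneg (x := s) (s := M); simp only [haadef, hbbdef] at *; linarith) infDist_nonneg
    have hb0 : bb s = 0 := le_antisymm (by have := infDist_nonneg (x := s) (s := UUᶜ); simp only [haadef, hbbdef] at *; linarith) infDist_nonneg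
    have hsM : s ∈ M := (hMclosed.mem_iff_infDist_zero hMne).mpr hb0
    exact (ne_of_gt (haaposUU s (hMUU hsM))) ha0
  set χ : Set.Icc (0:ℝ) 1 → ℝ := fun s => aa s / (aa s + bb s) with hχdef
  have hχcont : Continuous χ :=
    (continuous_infDist_pt _).div ((continuous_infDist_pt _).add (continuous_infDist_pt _))
      (fun s => (hdenom s).ne')
  have hχnonneg : ∀ s, 0 ≤ χ s := fun s => div_nonneg infDist_nonneg (hdenom s).le
  have hχle1 : ∀ s, χ s ≤ 1 := by
    intro s
    rw [hχdef]
    apply div_le_one_of_le₀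
    · have : 0 ≤ bb s := infDist_nonneg
      linarith
    · exact (hdenom s).le
  have hχM : ∀ s ∈ M, χ s = 1 := by
    intro s hs
    have hb0 : bb s = 0 := infDist_zero_of_mem hs
    rw [hχdef]; simp only [hb0, add_zero]
    have := hdenom s
    rw [hb0, add_zero] at this
    exact div_self this.ne'
  have hχ0 : ∀ s, s ∉ UU → χ s = 0 := by
    intro s hs
    have ha0 : aa s = 0 := infDist_zero_of_mem (by simpa using hs)
    rw [hχdef]; simp [ha0]
  set den : Set.Icc (0:ℝ) 1 → ℝ := fun s => ψ s + (1 - χ s) with hdendef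
  have hdenpos : ∀ s, 0 < den s := by
    intro s
    rcases lt_or_eq_of_le (hχle1 s) with h | h
    · have := hψnonneg s
      rw [hdendef]; dsimp only; linarith
    · have hb0 : bb s = 0 := by
        have h2 := hdenom s
        have : aa s = aa s + bb s := by
          have h' : aa s / (aa s + bb s) = 1 := h
          rw [div_eq_one_iff_eq h2.ne'] at h'
          exact h'
        linarith
      have hsM : s ∈ M := (hMclosed.mem_iff_infDist_zero hMne).mpr hb0
      have := hψpos s hsM
      rw [hdendef]; dsimp only; rw [← h]; linarith
  set hfun : Set.Icc (0:ℝ) 1 → V := fun s => (χ s / den s) • g s with hhdef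
  have hhcont : Continuous hfun := by
    apply Continuous.smul
    · exact hχcont.div (hψcont.add (continuous_const.sub hχcont)) (fun s => (hdenpos s).ne')
    · exact hgcont
  have hhnorm : ∀ s, ‖hfun s‖ ≤ 1 := by
    intro s
    rw [hhdef]
    dsimp only
    rw [norm_smul, Real.norm_eq_abs, abs_of_nonneg (div_nonneg (hχnonneg s) (hdenpos s).le)]
    rw [div_mul_eq_mul_div, div_le_one (hdenpos s)]
    have h1 := hgnorm s
    have h2 := hχnonneg s
    have h3 := hχle1 s
    have h4 := hψnonneg s
    have h5 : 0 ≤ ‖g s‖ := norm_nonneg _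
    rw [hdendef]
    dsimp only
    nlinarith
  have hh0 : hfun t0 = 0 := by rw [hhdef]; dsimp only; rw [hχ0 t0 ht0UU, zero_div, zero_smul]
  have hh1 : hfun t1 = 0 := by rw [hhdef]; dsimp only; rw [hχ0 t1 ht1UU, zero_div, zero_smul]
  have hhM : ∀ s ∈ M, D (l s) (hfun s) ≤ -(2*ε) := by
    intro s hs
    have hden_eq : den s = ψ s := by
      rw [hdendef]; dsimp only; rw [hχM s hs]; ring
    have hsum_le : D (l s) (g s) ≤ -(2*ε) * ψ s := by
      have h1 : D (l s) (g s) = ∑ i ∈ T, φ i s * D (l s) (v i.1) := by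
        rw [hgdef]; dsimp only
        rw [map_sum]
        congr 1; ext i
        rw [map_smul, smul_eq_mul]
      rw [h1]
      have h2 : ∑ i ∈ T, φ i s * D (l s) (v i.1) ≤ ∑ i ∈ T, φ i s * (-(2*ε)) := by
        apply Finset.sum_le_sum
        intro i _
        rcases eq_or_lt_of_le (hφnonneg i s) with h0 | h0
        · rw [← h0]; simp
        · have hiU : s ∈ U i.1 := by
            by_contra hnot
            exact absurd (hφzero i s hnot).symm (ne_of_lt h0)
          exact mul_le_mul_of_nonneg_left hiU.2.le (hφnonneg i s)
      calc ∑ i ∈ T, φ i s * D (l s) (v i.1) ≤ ∑ i ∈ T, φ i s * (-(2*ε)) := h2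
        _ = -(2*ε) * ψ s := by rw [hψdef]; dsimp only; rw [Finset.mul_sum]; exact Finset.sum_congr rfl fun i _ => by ring
    have hψp := hψpos s hs
    rw [hhdef]
    dsimp only
    rw [map_smul, hden_eq, hχM s hs, smul_eq_mul]
    rw [div_mul_eq_mul_div, one_mul, div_le_iff₀ hψp]
    calc D (l s) (g s) ≤ -(2*ε) * ψ s := hsum_le
      _ = -(2*ε) * ψ s := rfl
  -- the function q and tube lemma 1
  set q : (Set.Icc (0:ℝ) 1) × ℝ → ℝ := fun p => D (l p.1 + p.2 • hfun p.1) (hfun p.1) with hqdef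
  have hqcont : Continuous q := by
    apply Continuous.clm_apply
    · exact hDcont.comp ((l.continuous.comp continuous_fst).add
        (continuous_snd.smul (hhcont.comp continuous_fst)))
    · exact hhcont.comp continuous_fst
  have hsub1 : M ×ˢ ({0} : Set ℝ) ⊆ {p | q p < -(3/2*ε)} := by
    rintro ⟨s, τ⟩ ⟨hs, hτ⟩
    simp only [Set.mem_singleton_iff] at hτ
    subst hτ
    have := hhM s hs
    simp only [hqdef, Set.mem_setOf_eq, zero_smul, add_zero]
    linarith
  obtain ⟨W, J, hWopen, hJopen, hMW, h0J, hWJ⟩ :=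
    generalized_tube_lemma hMcompact isCompact_singleton
      (isOpen_lt hqcont continuous_const) hsub1
  obtain ⟨r, hr, hball⟩ := Metric.isOpen_iff.mp hJopen 0 (h0J rfl)
  -- complement estimate
  set Bs : Set (Set.Icc (0:ℝ) 1) := Wᶜ with hBsdef
  have hBclosed : IsClosed Bs := hWopen.isClosed_compl
  have hBcompact : IsCompact Bs := hBclosed.isCompact
  have hBfar : ∃ β > 0, ∃ δ₁ > 0, ∀ s ∈ Bs, ∀ τ ∈ Set.Icc (0:ℝ) δ₁,
      E (l s + τ • hfun s) ≤ Φl - β := by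
    rcases Bs.eq_empty_or_nonempty with hBe | hBne
    · exact ⟨Φl, hΦpos, 1, one_pos, fun s hs => by rw [hBe] at hs; exact absurd hs (Set.notMem_empty s)⟩
    · obtain ⟨sm, hsmB, hsmax⟩ := hBcompact.exists_isMaxOn hBne
        ((hEcont.comp l.continuous).continuousOn)
      have hsm_lt : E (l sm) < Φl := by
        rcases lt_or_eq_of_le (hub sm) with h | h
        · exact h
        · exact absurd (hMW (show sm ∈ M from h)) hsmB
      set β' : ℝ := Φl - E (l sm) with hβ'def
      have hβ'pos : 0 < β' := by rw [hβ'def]; linarith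
      have hsub2 : Bs ×ˢ ({0} : Set ℝ) ⊆ {p : (Set.Icc (0:ℝ) 1) × ℝ |
          E (l p.1 + p.2 • hfun p.1) < Φl - β'/2} := by
        rintro ⟨s, τ⟩ ⟨hs, hτ⟩
        simp only [Set.mem_singleton_iff] at hτ
        subst hτ
        simp only [Set.mem_setOf_eq, zero_smul, add_zero]
        have h9 := hsmax hs
        simp only [Function.comp, Set.mem_setOf_eq] at h9
        rw [hβ'def]
        linarith
      have hopen2 : IsOpen {p : (Set.Icc (0:ℝ) 1) × ℝ |
          E (l p.1 + p.2 • hfun p.1) < Φl - β'/2} := by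
        apply isOpen_lt _ continuous_const
        exact hEcont.comp ((l.continuous.comp continuous_fst).add
          (continuous_snd.smul (hhcont.comp continuous_fst)))
      obtain ⟨W2, J2, _, hJ2open, hBW2, h0J2, hWJ2⟩ :=
        generalized_tube_lemma hBcompact isCompact_singleton hopen2 hsub2
      obtain ⟨r2, hr2, hball2⟩ := Metric.isOpen_iff.mp hJ2open 0 (h0J2 rfl)
      refine ⟨β'/2, by linarith, r2/2, by linarith, ?_⟩
      intro s hs τ hτ
      have hτJ2 : τ ∈ J2 := by
        apply hball2
        simp only [Metric.mem_ball, Real.dist_eq, sub_zero]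
        rw [abs_of_nonneg hτ.1]
        linarith [hτ.2]
      have hmem : (s, τ) ∈ W2 ×ˢ J2 := ⟨hBW2 hs, hτJ2⟩
      exact (hWJ2 hmem).le
  obtain ⟨β, hβpos, δ₁, hδ₁pos, hBest⟩ := hBfar
  -- choose δ
  set δ : ℝ := min (min (r/2) δ₁) (β/(3*ε)) with hδdef
  have hδpos : 0 < δ := by
    apply lt_min (lt_min (by linarith) hδ₁pos)
    positivity
  have hδr : δ ≤ r/2 := le_trans (min_le_left _ _) (min_le_left _ _)
  have hδ1 : δ ≤ δ₁ := le_trans (min_le_left _ _) (min_le_right _ _)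
  have hδβ : δ ≤ β/(3*ε) := min_le_right _ _
  -- perturbed path
  set l' : C(Set.Icc (0:ℝ) 1, V) :=
    ⟨fun s => l s + δ • hfun s, l.continuous.add (continuous_const.smul hhcont)⟩ with hl'def
  have hl'0 : l' t0 = l t0 := by
    simp only [hl'def, ContinuousMap.coe_mk, hh0, smul_zero, add_zero]
  have hl'1 : l' t1 = l t1 := by
    simp only [hl'def, ContinuousMap.coe_mk, hh1, smul_zero, add_zero]
  -- derivative along the segment
  have hder : ∀ (s : Set.Icc (0:ℝ) 1) (τ : ℝ),
      HasDerivAt (fun τ : ℝ => E (l s + τ • hfun s)) (q (s, τ)) τ := by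
    intro s τ
    have h1 : HasDerivAt (fun τ : ℝ => l s + τ • hfun s) (hfun s) τ := by
      simpa using ((hasDerivAt_id τ).smul_const (hfun s)).const_add (l s)
    have h2 : HasFDerivAt E (D (l s + τ • hfun s)) (l s + τ • hfun s) :=
      ((hE.differentiable one_ne_zero) (l s + τ • hfun s)).hasFDerivAt
    exact h2.comp_hasDerivAt τ h1
  -- the key bound
  have hub' : ∀ s, E (l' s) ≤ Φl - (3/2*ε)*δ := by
    intro s
    rcases Classical.em (s ∈ W) with hsW | hsW
    · obtain ⟨ξ, hξ, hslope⟩ := exists_hasDerivAt_eq_slope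
        (fun τ => E (l s + τ • hfun s)) (fun τ => q (s, τ)) hδpos
        ((hEcont.comp (continuous_const.add (continuous_id.smul continuous_const))).continuousOn)
        (fun τ _ => hder s τ)
      have hξJ : ξ ∈ J := by
        apply hball
        simp only [Metric.mem_ball, Real.dist_eq, sub_zero]
        rw [abs_of_nonneg hξ.1.le]
        linarith [hξ.2]
      have hqξ : q (s, ξ) < -(3/2*ε) := hWJ ⟨hsW, hξJ⟩
      simp only [zero_smul, add_zero, sub_zero] at hslope
      rw [eq_div_iff hδpos.ne'] at hslope
      have h3 : q (s, ξ) * δ ≤ (-(3/2*ε)) * δ := mul_le_mul_of_nonneg_right hqξ.le hδpos.le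
      have h5 : E (l' s) = E (l s + δ • hfun s) := by simp only [hl'def, ContinuousMap.coe_mk]
      rw [h5]
      nlinarith [hslope, h3, hub s]
    · have hsB : s ∈ Bs := hsW
      have h1 : E (l s + δ • hfun s) ≤ Φl - β := hBest s hsB δ ⟨hδpos.le, hδ1⟩
      have h2 : (3/2*ε)*δ ≤ β/2 := by
        have h3 : δ * (3*ε) ≤ β := (le_div_iff₀ (by positivity)).mp hδβ
        nlinarith
      simp only [hl'def, ContinuousMap.coe_mk]
      linarith
  -- distance bound
  have hdist' : ∀ s, dist (l' s) (l s) ≤ δ := by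
    intro s
    simp only [hl'def, ContinuousMap.coe_mk, dist_eq_norm, add_sub_cancel_left]
    rw [norm_smul, Real.norm_eq_abs, abs_of_nonneg hδpos.le]
    nlinarith [hhnorm s, hδpos]
  -- contradiction via Ekeland hypothesis
  have := hek l' hl'0 hl'1 δ hδpos.le hdist' (Φl - (3/2*ε)*δ) hub'
  nlinarith [hδpos, hε]


set_option maxHeartbeats 1000000 in
/-- Mountain Pass Theorem (Proposition 2.11 of the paper; Ambrosetti–Rabinowitz).
If a `C¹` functional `E` on a real Banach space satisfies the Palais–Smale condition,
`E(0) = 0`, `E ≥ α > 0` on the sphere of radius `ρ > 0`, and `E(u₁) ≤ 0` for some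
`u₁` with `‖u₁‖ > ρ`, then the minimax value `c` over paths joining `0` to `u₁`
satisfies `c ≥ α` and is a critical value of `E`. -/
theorem stmt_4 {V : Type*} [NormedAddCommGroup V] [NormedSpace ℝ V] [CompleteSpace V]
    (E : V → ℝ) (hE : ContDiff ℝ 1 E)
    (hPS : ∀ u : ℕ → V,
      (∃ C : ℝ, ∀ m, |E (u m)| ≤ C) →
      Tendsto (fun m => ‖fderiv ℝ E (u m)‖) atTop (nhds 0) →
      ∃ (k : ℕ → ℕ) (v : V), StrictMono k ∧ Tendsto (u ∘ k) atTop (nhds v))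
    (hE0 : E 0 = 0)
    (ρ α : ℝ) (hρ : 0 < ρ) (hα : 0 < α)
    (hsphere : ∀ u : V, ‖u‖ = ρ → α ≤ E u)
    (u₁ : V) (hu₁ : ρ < ‖u₁‖) (hEu₁ : E u₁ ≤ 0)
    (c : ℝ)
    (hc : c = sInf { b : ℝ | ∃ l : C(Set.Icc (0:ℝ) 1, V),
      l ⟨0, Set.left_mem_Icc.mpr zero_le_one⟩ = 0 ∧
      l ⟨1, Set.right_mem_Icc.mpr zero_le_one⟩ = u₁ ∧
      b = ⨆ t : Set.Icc (0:ℝ) 1, E (l t) }) :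
    α ≤ c ∧ ∃ u : V, E u = c ∧ fderiv ℝ E u = 0 := by
  have hEcont : Continuous E := hE.continuous
  have hDcont : Continuous (fderiv ℝ E) := hE.continuous_fderiv one_ne_zero
  set t0 : Set.Icc (0:ℝ) 1 := ⟨0, Set.left_mem_Icc.mpr zero_le_one⟩ with ht0
  set t1 : Set.Icc (0:ℝ) 1 := ⟨1, Set.right_mem_Icc.mpr zero_le_one⟩ with ht1
  set S : Set C(Set.Icc (0:ℝ) 1, V) := {p | p t0 = 0 ∧ p t1 = u₁} with hSdef
  have hSclosed : IsClosed S :=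
    (isClosed_eq (continuous_eval_const t0) continuous_const).inter
      (isClosed_eq (continuous_eval_const t1) continuous_const)
  haveI : CompleteSpace S := hSclosed.completeSpace_coe
  -- Φ
  set Φ : S → ℝ := fun p => ⨆ t : Set.Icc (0:ℝ) 1, E (p.1 t) with hΦdef
  have hbdd : ∀ p : C(Set.Icc (0:ℝ) 1, V), BddAbove (range fun t => E (p t)) :=
    fun p => (isCompact_range (hEcont.comp p.continuous)).bddAbove
  have hle : ∀ (p : S) (t : Set.Icc (0:ℝ) 1), E (p.1 t) ≤ Φ p :=
    fun p t => le_ciSup (hbdd p.1) t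
  have hattain : ∀ p : S, ∃ t, E (p.1 t) = Φ p := by
    intro p
    obtain ⟨t, _, ht⟩ := isCompact_univ.exists_isMaxOn (Set.univ_nonempty)
      ((hEcont.comp p.1.continuous).continuousOn)
    refine ⟨t, le_antisymm (hle p t) (ciSup_le fun s => ht (Set.mem_univ s))⟩
  -- every path crosses the sphere
  have hcross : ∀ p : S, ∃ t, ‖p.1 t‖ = ρ := by
    intro p
    have hcont : Continuous fun t : Set.Icc (0:ℝ) 1 => ‖p.1 t‖ :=
      continuous_norm.comp p.1.continuous
    have h1 : Set.Icc ‖p.1 t0‖ ‖p.1 t1‖ ⊆ Set.range fun t => ‖p.1 t‖ :=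
      intermediate_value_univ t0 t1 hcont
    have h2 : ρ ∈ Set.Icc ‖p.1 t0‖ ‖p.1 t1‖ := by
      rw [p.2.1, p.2.2, norm_zero]
      exact ⟨hρ.le, hu₁.le⟩
    exact h1 h2
  have hΦα : ∀ p : S, α ≤ Φ p := by
    intro p
    obtain ⟨t, ht⟩ := hcross p
    exact le_trans (hsphere _ ht) (hle p t)
  -- the minimax set
  set SS : Set ℝ := { b : ℝ | ∃ l : C(Set.Icc (0:ℝ) 1, V),
      l t0 = 0 ∧ l t1 = u₁ ∧ b = ⨆ t : Set.Icc (0:ℝ) 1, E (l t) } with hSSdef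
  have hSSlb : ∀ b ∈ SS, α ≤ b := by
    rintro b ⟨l, h0, h1, rfl⟩
    exact hΦα ⟨l, h0, h1⟩
  have hSSne : SS.Nonempty := by
    refine ⟨_, ⟨⟨fun t => (t : ℝ) • u₁, by fun_prop⟩, ?_, ?_, rfl⟩⟩
    · simp [ht0]
    · simp [ht1]
  have hcS : c = sInf SS := hc
  have hαc : α ≤ c := by
    rw [hcS]
    exact le_csInf hSSne hSSlb
  have hcΦ : ∀ p : S, c ≤ Φ p := by
    intro p
    rw [hcS]
    exact csInf_le ⟨α, hSSlb⟩ ⟨p.1, p.2.1, p.2.2, rfl⟩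
  -- lower semicontinuity of Φ
  have hlsc : LowerSemicontinuous Φ := by
    intro p b hb
    obtain ⟨t, ht⟩ := exists_lt_of_lt_ciSup hb
    have hcont : Continuous fun p' : S => E (p'.1 t) :=
      hEcont.comp ((continuous_eval_const t).comp continuous_subtype_val)
    have hev : ∀ᶠ p' : S in 𝓝 p, b < E (p'.1 t) :=
      (hcont.tendsto p).eventually (eventually_gt_nhds ht)
    filter_upwards [hev] with p' hp'
    exact lt_of_lt_of_le hp' (hle p' t)
  -- the PS sequence
  have hseq : ∀ m : ℕ, ∃ x : V, c ≤ E x ∧ E x < c + 1/(m+1) ∧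
      ‖fderiv ℝ E x‖ ≤ 2 * (1/(m+1)) := by
    intro m
    have hεm : (0:ℝ) < 1/(m+1) := by positivity
    -- pick a path with Φ close to c
    have hlt : sInf SS < c + 1/(m+1) := by rw [← hcS]; linarith
    obtain ⟨b, hbSS, hblt⟩ := (csInf_lt_iff ⟨α, hSSlb⟩ hSSne).mp hlt
    obtain ⟨l0, hl00, hl01, rfl⟩ := hbSS
    set x₀ : S := ⟨l0, hl00, hl01⟩ with hx₀
    obtain ⟨p, hp1, hp2⟩ := ekeland_weak Φ hlsc α hΦα (1/(m+1)) hεm x₀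
    have hΦp_lt : Φ p < c + 1/(m+1) := lt_of_le_of_lt hp1 hblt
    have hΦp_pos : 0 < Φ p := lt_of_lt_of_le hα (hΦα p)
    have hek : ∀ l' : C(Set.Icc (0:ℝ) 1, V),
        l' t0 = p.1 t0 → l' t1 = p.1 t1 →
        ∀ d, 0 ≤ d → (∀ s, dist (l' s) (p.1 s) ≤ d) →
        ∀ b', (∀ s, E (l' s) ≤ b') → Φ p ≤ b' + (1/(m+1)) * d := by
      intro l' he0 he1 d hd hdist b' hb'
      have hy : l' ∈ S := ⟨by rw [he0, p.2.1], by rw [he1, p.2.2]⟩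
      have h1 := hp2 ⟨l', hy⟩
      have h2 : Φ (⟨l', hy⟩ : S) ≤ b' := ciSup_le hb'
      have h3 : dist p (⟨l', hy⟩ : S) ≤ d := by
        rw [Subtype.dist_eq]
        rw [ContinuousMap.dist_le hd]
        intro s
        rw [dist_comm]
        exact hdist s
      have h4 : (1/(m+1) : ℝ) * dist p (⟨l', hy⟩ : S) ≤ (1/(m+1)) * d :=
        mul_le_mul_of_nonneg_left h3 hεm.le
      linarith
    obtain ⟨t, htE, htD⟩ := mp_key E hE p.1 (Φ p) (1/(m+1)) hεm hΦp_pos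
      (hle p) (hattain p)
      (by rw [p.2.1, hE0])
      (by rw [p.2.2]; exact hEu₁)
      hek
    exact ⟨p.1 t, htE ▸ hcΦ p, htE ▸ hΦp_lt, htD⟩
  choose u hu1 hu2 hu3 using hseq
  -- limits
  have hinv : Tendsto (fun m : ℕ => (1:ℝ)/(m+1)) atTop (𝓝 0) :=
    tendsto_one_div_add_atTop_nhds_zero_nat
  have hEtend : Tendsto (fun m => E (u m)) atTop (𝓝 c) := by
    apply tendsto_of_tendsto_of_tendsto_of_le_of_le
      (tendsto_const_nhds) (by simpa using tendsto_const_nhds.add hinv)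
      (fun m => hu1 m) (fun m => (hu2 m).le)
  have hDtend : Tendsto (fun m => ‖fderiv ℝ E (u m)‖) atTop (𝓝 0) := by
    apply squeeze_zero (fun m => norm_nonneg _) hu3
    simpa using hinv.const_mul 2
  have hbound : ∃ C : ℝ, ∀ m, |E (u m)| ≤ C := by
    refine ⟨|c| + 1, fun m => ?_⟩
    have h1 := hu1 m
    have h2 := (hu2 m).le
    have h3 : (1:ℝ)/(m+1) ≤ 1 := by
      rw [div_le_one (by positivity)]
      simp
    rw [abs_le]
    constructor
    · have := neg_abs_le c; linarith
    · have := le_abs_self c; linarith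
  obtain ⟨k, v, hk, hkv⟩ := hPS u hbound hDtend
  refine ⟨hαc, v, ?_, ?_⟩
  · have h1 : Tendsto (fun m => E ((u ∘ k) m)) atTop (𝓝 (E v)) :=
      (hEcont.tendsto v).comp hkv
    have h2 : Tendsto (fun m => E ((u ∘ k) m)) atTop (𝓝 c) :=
      hEtend.comp hk.tendsto_atTop
    exact tendsto_nhds_unique h1 h2
  · have h1 : Tendsto (fun m => fderiv ℝ E ((u ∘ k) m)) atTop (𝓝 (fderiv ℝ E v)) :=
      (hDcont.tendsto v).comp hkv
    have h2 : Tendsto (fun m => fderiv ℝ E ((u ∘ k) m)) atTop (𝓝 0) := by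
      rw [← tendsto_zero_iff_norm_tendsto_zero] at hDtend
      exact hDtend.comp hk.tendsto_atTop
    exact tendsto_nhds_unique h1 h2
end

section
/- Let K ⊂ ℝⁿ be a compact set, let f be a continuous real-valued function on K × ℝ, and define F(x,u) = ∫₀ᵘ f(x,v) dv. Assume there exist q > 2 and R₀ > 0 such that 0 < qF(x,u) ≤ u f(x,u) for all x ∈ K and all |u| ≥ R₀. Then there exist constants a₁, a₂, a₃ > 0 such that (1/q)(u f(x,u) + a₁) ≥ F(x,u) + a₂ ≥ a₃ |u|^q for all u ∈ ℝ and all x ∈ K. -/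
open intervalIntegral MeasureTheory

/-- Auxiliary monotonicity lemma: under the AR condition on `[R₀, ∞)`, the primitive
grows at least like `u ^ q`. -/
lemma aux_mono (g : ℝ → ℝ) (hg : Continuous g) (q R₀ : ℝ) (hq : 0 < q) (hR₀ : 0 < R₀)
    (hAR : ∀ u, R₀ ≤ u → q * (∫ v in (0:ℝ)..u, g v) ≤ u * g u) :
    ∀ u, R₀ ≤ u → (∫ v in (0:ℝ)..R₀, g v) / R₀ ^ q * u ^ q ≤ ∫ v in (0:ℝ)..u, g v := by
  set G : ℝ → ℝ := fun u => ∫ v in (0:ℝ)..u, g v with hGdef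
  have hGderiv : ∀ t : ℝ, HasDerivAt G (g t) t := fun t =>
    intervalIntegral.integral_hasDerivAt_right (hg.intervalIntegrable 0 t)
      (hg.stronglyMeasurableAtFilter _ _) hg.continuousAt
  set φ : ℝ → ℝ := fun t => G t / t ^ q with hφdef
  have hφderiv : ∀ t : ℝ, R₀ ≤ t →
      HasDerivAt φ ((g t * t ^ q - G t * (q * t ^ (q - 1))) / (t ^ q) ^ 2) t := by
    intro t ht
    have ht0 : (0:ℝ) < t := lt_of_lt_of_le hR₀ ht
    exact (hGderiv t).div (Real.hasDerivAt_rpow_const (Or.inl ht0.ne'))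
      (Real.rpow_pos_of_pos ht0 q).ne'
  have hmono : MonotoneOn φ (Set.Ici R₀) := by
    apply monotoneOn_of_deriv_nonneg (convex_Ici R₀)
    · intro t ht
      exact ((hφderiv t ht).continuousAt).continuousWithinAt
    · intro t ht
      rw [interior_Ici] at ht
      exact ((hφderiv t ht.le).differentiableAt).differentiableWithinAt
    · intro t ht
      rw [interior_Ici] at ht
      have ht0 : (0:ℝ) < t := lt_trans hR₀ ht
      rw [(hφderiv t ht.le).deriv]
      apply div_nonneg _ (sq_nonneg _)
      have hpow : t ^ q = t ^ (q - 1) * t := by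
        rw [← Real.rpow_add_one ht0.ne' (q - 1)]
        ring_nf
      have hnum : g t * t ^ q - G t * (q * t ^ (q - 1))
          = t ^ (q - 1) * (t * g t - q * G t) := by
        rw [hpow]; ring
      rw [hnum]
      exact mul_nonneg (Real.rpow_nonneg ht0.le _) (by linarith [hAR t ht.le])
  intro u hu
  have hu0 : (0:ℝ) < u := lt_of_lt_of_le hR₀ hu
  have h := hmono Set.self_mem_Ici hu hu
  have hupow : (0:ℝ) < u ^ q := Real.rpow_pos_of_pos hu0 q
  calc G R₀ / R₀ ^ q * u ^ q ≤ G u / u ^ q * u ^ q :=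
        mul_le_mul_of_nonneg_right h hupow.le
    _ = G u := div_mul_cancel₀ _ hupow.ne'

/-- Negative-side version of `aux_mono`. -/
lemma aux_mono_neg (g : ℝ → ℝ) (hg : Continuous g) (q R₀ : ℝ) (hq : 0 < q) (hR₀ : 0 < R₀)
    (hAR : ∀ u, u ≤ -R₀ → q * (∫ v in (0:ℝ)..u, g v) ≤ u * g u) :
    ∀ u, u ≤ -R₀ → (∫ v in (0:ℝ)..(-R₀), g v) / R₀ ^ q * (-u) ^ q ≤ ∫ v in (0:ℝ)..u, g v := by
  have key : ∀ w : ℝ, (∫ v in (0:ℝ)..w, -g (-v)) = ∫ v in (0:ℝ)..(-w), g v := by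
    intro w
    rw [intervalIntegral.integral_neg, intervalIntegral.integral_comp_neg, neg_zero,
      intervalIntegral.integral_symm, neg_neg]
  have hAR' : ∀ u, R₀ ≤ u → q * (∫ v in (0:ℝ)..u, -g (-v)) ≤ u * -g (-u) := by
    intro w hw
    rw [key]
    have h := hAR (-w) (by linarith)
    calc q * ∫ v in (0:ℝ)..(-w), g v ≤ (-w) * g (-w) := h
      _ = w * -g (-w) := by ring
  intro u hu
  have h := aux_mono (fun v => -g (-v)) (by continuity) q R₀ hq hR₀ hAR' (-u) (by linarith)
  rw [key, key, neg_neg] at h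
  exact h

/-- Continuity of the parametric interval integral. -/
lemma cont_param {n : ℕ} (g : EuclideanSpace ℝ (Fin n) × ℝ → ℝ) (hg : Continuous g) (c : ℝ) :
    Continuous fun x : EuclideanSpace ℝ (Fin n) => ∫ v in (0:ℝ)..c, g (x, v) := by
  rw [continuous_iff_continuousAt]
  intro x₀
  obtain ⟨M, hM⟩ := ((isCompact_closedBall x₀ 1).prod
    (isCompact_uIcc (a := (0:ℝ)) (b := c))).exists_bound_of_continuousOn hg.continuousOn
  apply intervalIntegral.continuousAt_of_dominated_interval (bound := fun _ => M)
  · filter_upwards with x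
    exact ((hg.comp (Continuous.prodMk_right x)).aestronglyMeasurable).restrict
  · filter_upwards [Metric.closedBall_mem_nhds x₀ one_pos] with x hx
    filter_upwards with t ht
    exact hM (x, t) ⟨hx, Set.uIoc_subset_uIcc ht⟩
  · exact intervalIntegrable_const
  · filter_upwards with t ht
    exact (hg.comp (continuous_id.prodMk continuous_const)).continuousAt

/-- Estimates (4.6)–(4.7) of the paper: under the Ambrosetti–Rabinowitz condition
`0 < qF(x,u) ≤ u f(x,u)` for `|u| ≥ R₀` (with `q > 2`, `R₀ > 0`), there are constants
`a₁, a₂, a₃ > 0` such that `(1/q)(u f(x,u) + a₁) ≥ F(x,u) + a₂ ≥ a₃ |u|^q` for all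
`u ∈ ℝ` and `x ∈ K`. -/
theorem stmt_9 {n : ℕ} (K : Set (EuclideanSpace ℝ (Fin n))) (hK : IsCompact K)
    (f : EuclideanSpace ℝ (Fin n) → ℝ → ℝ)
    (hf : ContinuousOn (fun z : EuclideanSpace ℝ (Fin n) × ℝ => f z.1 z.2)
      (K ×ˢ Set.univ))
    (F : EuclideanSpace ℝ (Fin n) → ℝ → ℝ)
    (hF : ∀ x u, F x u = ∫ v in (0:ℝ)..u, f x v)
    (q R₀ : ℝ) (hq : 2 < q) (hR₀ : 0 < R₀)
    (hAR : ∀ x ∈ K, ∀ u : ℝ, R₀ ≤ |u| →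
      0 < q * F x u ∧ q * F x u ≤ u * f x u) :
    ∃ a₁ > (0:ℝ), ∃ a₂ > (0:ℝ), ∃ a₃ > (0:ℝ), ∀ x ∈ K, ∀ u : ℝ,
      F x u + a₂ ≤ (1 / q) * (u * f x u + a₁) ∧
      a₃ * |u| ^ q ≤ F x u + a₂ := by
  rcases Set.eq_empty_or_nonempty K with rfl | hKne
  · exact ⟨1, one_pos, 1, one_pos, 1, one_pos, fun x hx => absurd hx (Set.notMem_empty x)⟩
  have hq0 : (0:ℝ) < q := by linarith
  -- Tietze extension of f to the whole space
  have hclosed : IsClosed (K ×ˢ (Set.univ : Set ℝ)) := hK.isClosed.prod isClosed_univ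
  obtain ⟨g, hg⟩ := ContinuousMap.exists_restrict_eq hclosed
    ⟨_, hf.restrict⟩
  have hgc : Continuous g := g.continuous
  have geq : ∀ x ∈ K, ∀ v : ℝ, g (x, v) = f x v := by
    intro x hx v
    exact ContinuousMap.congr_fun hg ⟨(x, v), ⟨hx, Set.mem_univ v⟩⟩
  have hFg : ∀ x ∈ K, ∀ u : ℝ, F x u = ∫ v in (0:ℝ)..u, g (x, v) := by
    intro x hx u
    rw [hF]
    exact (intervalIntegral.integral_congr fun v _ => geq x hx v).symm
  -- uniform bound on |g| on K × [-R₀, R₀]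
  obtain ⟨M₀, hM₀⟩ := (hK.prod (isCompact_Icc (a := -R₀)
    (b := R₀))).exists_bound_of_continuousOn hgc.continuousOn
  set M : ℝ := max M₀ 0 with hMdef
  have hMnonneg : (0:ℝ) ≤ M := le_max_right _ _
  have hM : ∀ x ∈ K, ∀ u ∈ Set.Icc (-R₀) R₀, |g (x, u)| ≤ M := fun x hx u hu =>
    le_trans (hM₀ (x, u) ⟨hx, hu⟩) (le_max_left _ _)
  have hfbound : ∀ x ∈ K, ∀ u : ℝ, |u| ≤ R₀ → |f x u| ≤ M := by
    intro x hx u hu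
    rw [← geq x hx u]
    exact hM x hx u (abs_le.mp hu)
  have hFbound : ∀ x ∈ K, ∀ u : ℝ, |u| ≤ R₀ → |F x u| ≤ M * R₀ := by
    intro x hx u hu
    rw [hFg x hx]
    have h1 : ‖∫ v in (0:ℝ)..u, g (x, v)‖ ≤ M * |u - 0| := by
      apply intervalIntegral.norm_integral_le_of_norm_le_const
      intro t ht
      apply hM x hx
      rcases Set.mem_uIcc.mp (Set.uIoc_subset_uIcc ht) with ⟨h1, h2⟩ | ⟨h1, h2⟩ <;>
        rcases abs_le.mp hu with ⟨h3, h4⟩ <;> constructor <;> linarith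
    calc |∫ v in (0:ℝ)..u, g (x, v)| ≤ M * |u - 0| := h1
      _ = M * |u| := by rw [sub_zero]
      _ ≤ M * R₀ := mul_le_mul_of_nonneg_left hu hMnonneg
  -- positive lower bound m for F x (±R₀) over K
  have hcont : Continuous fun x : EuclideanSpace ℝ (Fin n) =>
      min (∫ v in (0:ℝ)..R₀, g (x, v)) (∫ v in (0:ℝ)..(-R₀), g (x, v)) :=
    (cont_param g hgc R₀).min (cont_param g hgc (-R₀))
  obtain ⟨x₀, hx₀K, hx₀min⟩ := hK.exists_isMinOn hKne hcont.continuousOn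
  set m : ℝ := min (∫ v in (0:ℝ)..R₀, g (x₀, v)) (∫ v in (0:ℝ)..(-R₀), g (x₀, v)) with hmdef
  have hFpos : ∀ x ∈ K, 0 < F x R₀ ∧ 0 < F x (-R₀) := by
    intro x hx
    have h1 := (hAR x hx R₀ (by rw [abs_of_pos hR₀])).1
    have h2 := (hAR x hx (-R₀) (by rw [abs_neg, abs_of_pos hR₀])).1
    constructor <;> nlinarith
  have hm : 0 < m := by
    obtain ⟨h1, h2⟩ := hFpos x₀ hx₀K
    rw [hFg x₀ hx₀K R₀] at h1
    rw [hFg x₀ hx₀K (-R₀)] at h2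
    exact lt_min h1 h2
  have hmle : ∀ x ∈ K, m ≤ F x R₀ ∧ m ≤ F x (-R₀) := by
    intro x hx
    have h := isMinOn_iff.mp hx₀min x hx
    constructor
    · rw [hFg x hx R₀]; exact h.trans (min_le_left _ _)
    · rw [hFg x hx (-R₀)]; exact h.trans (min_le_right _ _)
  have hRq : (0:ℝ) < R₀ ^ q := Real.rpow_pos_of_pos hR₀ q
  -- key lower bound for |u| ≥ R₀
  have key : ∀ x ∈ K, ∀ u : ℝ, R₀ ≤ |u| → m / R₀ ^ q * |u| ^ q ≤ F x u := by
    intro x hx u hu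
    have hgx : Continuous fun v : ℝ => g (x, v) :=
      hgc.comp (continuous_const.prodMk continuous_id)
    rcases abs_cases u with ⟨habs, hsign⟩ | ⟨habs, hsign⟩
    · rw [habs] at hu ⊢
      have hAR' : ∀ w, R₀ ≤ w → q * (∫ v in (0:ℝ)..w, g (x, v)) ≤ w * g (x, w) := by
        intro w hw
        have h := (hAR x hx w (by rw [abs_of_pos (lt_of_lt_of_le hR₀ hw)]; exact hw)).2
        rw [hFg x hx w] at h
        rw [geq x hx w]
        exact h
      have h := aux_mono _ hgx q R₀ hq0 hR₀ hAR' u hu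
      have hmF : m ≤ ∫ v in (0:ℝ)..R₀, g (x, v) := by
        rw [← hFg x hx R₀]; exact (hmle x hx).1
      calc m / R₀ ^ q * u ^ q ≤ (∫ v in (0:ℝ)..R₀, g (x, v)) / R₀ ^ q * u ^ q := by
            apply mul_le_mul_of_nonneg_right _ (Real.rpow_nonneg (by linarith) q)
            exact (div_le_div_iff_of_pos_right hRq).mpr hmF
        _ ≤ ∫ v in (0:ℝ)..u, g (x, v) := h
        _ = F x u := (hFg x hx u).symm
    · rw [habs] at hu ⊢
      have hune : u ≤ -R₀ := by linarith
      have hAR' : ∀ w, w ≤ -R₀ → q * (∫ v in (0:ℝ)..w, g (x, v)) ≤ w * g (x, w) := by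
        intro w hw
        have hwabs : R₀ ≤ |w| := by rw [abs_of_neg (by linarith)]; linarith
        have h := (hAR x hx w hwabs).2
        rw [hFg x hx w] at h
        rw [geq x hx w]
        exact h
      have h := aux_mono_neg _ hgx q R₀ hq0 hR₀ hAR' u hune
      have hmF : m ≤ ∫ v in (0:ℝ)..(-R₀), g (x, v) := by
        rw [← hFg x hx (-R₀)]; exact (hmle x hx).2
      calc m / R₀ ^ q * (-u) ^ q
          ≤ (∫ v in (0:ℝ)..(-R₀), g (x, v)) / R₀ ^ q * (-u) ^ q := by
            apply mul_le_mul_of_nonneg_right _ (Real.rpow_nonneg (by linarith) q)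
            exact (div_le_div_iff_of_pos_right hRq).mpr hmF
        _ ≤ ∫ v in (0:ℝ)..u, g (x, v) := h
        _ = F x u := (hFg x hx u).symm
  -- choose the constants
  have hMR : (0:ℝ) ≤ M * R₀ := mul_nonneg hMnonneg hR₀.le
  refine ⟨q * (M * R₀ + m) + (q + 1) * (M * R₀) + 1, by nlinarith,
    M * R₀ + m, by linarith, m / R₀ ^ q, div_pos hm hRq, ?_⟩
  intro x hx u
  constructor
  · -- first inequality
    rw [one_div, ← div_eq_inv_mul, le_div_iff₀ hq0]
    by_cases hcase : R₀ ≤ |u|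
    · have h := (hAR x hx u hcase).2
      nlinarith
    · push_neg at hcase
      have h1 := abs_le.mp (hFbound x hx u hcase.le)
      have h2 : |u * f x u| ≤ R₀ * M := by
        rw [abs_mul]
        exact mul_le_mul hcase.le (hfbound x hx u hcase.le) (abs_nonneg _) hR₀.le
      have h2' := abs_le.mp h2
      nlinarith
  · -- second inequality
    by_cases hcase : R₀ ≤ |u|
    · have h := key x hx u hcase
      linarith
    · push_neg at hcase
      have h1 := abs_le.mp (hFbound x hx u hcase.le)
      have h2 : m / R₀ ^ q * |u| ^ q ≤ m / R₀ ^ q * R₀ ^ q :=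
        mul_le_mul_of_nonneg_left
          (Real.rpow_le_rpow (abs_nonneg u) hcase.le hq0.le)
          (div_pos hm hRq).le
      rw [div_mul_cancel₀ _ hRq.ne'] at h2
      linarith
end

section
/- Let q > 1, B₁ > 0, C₂ > 0, and let α be a real number with α > q/(q-1). Then there is no sequence of real numbers (b_k)_{k ∈ ℕ} and index k₀ ∈ ℕ such that for all k ≥ k₀ both b_k ≥ C₂ · k^{α} and b_{k+1} ≤ b_k + B₁( b_k^{1/q} + 1 ) hold. -/
/-- Core of Proposition 4.6 of the paper: a sequence growing at least like
`C₂ k^α` with `α > q/(q-1)` cannot satisfy the recursive bound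
`b_{k+1} ≤ b_k + B₁(b_k^{1/q} + 1)` from some index on. -/
theorem stmt_11 (q B₁ C₂ α : ℝ) (hq : 1 < q) (hB₁ : 0 < B₁) (hC₂ : 0 < C₂)
    (hα : q / (q - 1) < α) :
    ¬ ∃ (b : ℕ → ℝ) (k₀ : ℕ), ∀ k, k₀ ≤ k →
      C₂ * (k : ℝ) ^ α ≤ b k ∧ b (k + 1) ≤ b k + B₁ * (b k ^ (1 / q) + 1) := by
  rintro ⟨b, k₀, h⟩
  set β : ℝ := q / (q - 1) with hβ
  have hq1 : (0:ℝ) < q - 1 := by linarith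
  have hq0 : (0:ℝ) < q := by linarith
  have hβ1 : 1 < β := by rw [hβ, lt_div_iff₀ hq1]; linarith
  have hβ0 : 0 < β := by linarith
  have hβq : β * (1 / q) = β - 1 := by rw [hβ]; field_simp; ring
  have hinv : 1 / q + 1 / β = 1 := by rw [hβ]; field_simp; ring
  set k₁ : ℕ := max k₀ 1 with hk₁
  have hk₁0 : k₀ ≤ k₁ := le_max_left _ _
  have hk₁1 : (1:ℝ) ≤ (k₁:ℝ) := by
    exact_mod_cast Nat.one_le_iff_ne_zero.mpr (by positivity)
  have hk₁pos : (0:ℝ) < (k₁:ℝ) := lt_of_lt_of_le one_pos hk₁1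
  set c : ℝ := 2 * B₁ / β with hc
  have hc0 : 0 < c := by positivity
  set M : ℝ := max c (max (c ^ β) (max 1 (b k₁ / (k₁:ℝ) ^ β))) with hM
  have hM1 : (1:ℝ) ≤ M :=
    le_trans (le_max_left _ _) (le_trans (le_max_right _ _) (le_max_right _ _))
  have hM0 : (0:ℝ) < M := lt_of_lt_of_le one_pos hM1
  have hMc : c ≤ M := le_max_left _ _
  have hMcβ : c ^ β ≤ M := le_trans (le_max_left _ _) (le_max_right _ _)
  have hMb : b k₁ / (k₁:ℝ) ^ β ≤ M :=
    le_trans (le_max_right _ _) (le_trans (le_max_right _ _) (le_max_right _ _))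
  -- key estimate on M
  have hMq : B₁ * M ^ (1 / q) ≤ β / 2 * M := by
    have h1 : c ≤ M ^ (1 / β) := by
      calc c = (c ^ β) ^ (1 / β) := by
              rw [← Real.rpow_mul hc0.le, mul_one_div, div_self hβ0.ne', Real.rpow_one]
        _ ≤ M ^ (1 / β) := Real.rpow_le_rpow (by positivity) hMcβ (by positivity)
    have h2 : M ^ (1 / q) * M ^ (1 / β) = M := by
      rw [← Real.rpow_add hM0, hinv, Real.rpow_one]
    have h3 : B₁ = β / 2 * c := by rw [hc]; field_simp
    calc B₁ * M ^ (1 / q) = β / 2 * (c * M ^ (1 / q)) := by rw [h3]; ring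
      _ ≤ β / 2 * (M ^ (1 / β) * M ^ (1 / q)) := by
          apply mul_le_mul_of_nonneg_left _ (by positivity)
          exact mul_le_mul_of_nonneg_right h1 (by positivity)
      _ = β / 2 * M := by rw [mul_comm (M ^ (1 / β)), h2]
  have hB₁M : B₁ ≤ β / 2 * M := by
    have : B₁ = β / 2 * c := by rw [hc]; field_simp
    rw [this]
    exact mul_le_mul_of_nonneg_left hMc (by positivity)
  -- main induction: upper bound b j ≤ M j^β
  have key : ∀ j, k₁ ≤ j → b j ≤ M * (j:ℝ) ^ β := by
    intro j hj
    induction j, hj using Nat.le_induction with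
    | base =>
      have hpow : (0:ℝ) < (k₁:ℝ) ^ β := Real.rpow_pos_of_pos hk₁pos β
      calc b k₁ = b k₁ / (k₁:ℝ) ^ β * (k₁:ℝ) ^ β := by field_simp
        _ ≤ M * (k₁:ℝ) ^ β := mul_le_mul_of_nonneg_right hMb hpow.le
    | succ j hj ih =>
      obtain ⟨hlow, hrec⟩ := h j (le_trans hk₁0 hj)
      have hj1 : (1:ℝ) ≤ (j:ℝ) := le_trans hk₁1 (by exact_mod_cast hj)
      have hj0 : (0:ℝ) < (j:ℝ) := lt_of_lt_of_le one_pos hj1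
      have hbj0 : 0 ≤ b j := le_trans (by positivity) hlow
      have h1 : b j ^ (1 / q) ≤ M ^ (1 / q) * (j:ℝ) ^ (β - 1) := by
        calc b j ^ (1 / q) ≤ (M * (j:ℝ) ^ β) ^ (1 / q) :=
              Real.rpow_le_rpow hbj0 ih (by positivity)
          _ = M ^ (1 / q) * ((j:ℝ) ^ β) ^ (1 / q) :=
              Real.mul_rpow hM0.le (by positivity)
          _ = M ^ (1 / q) * (j:ℝ) ^ (β - 1) := by
              rw [← Real.rpow_mul hj0.le, hβq]
      have hjβ1 : (1:ℝ) ≤ (j:ℝ) ^ (β - 1) :=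
        Real.one_le_rpow hj1 (by linarith)
      -- Bernoulli
      have hbern : (j:ℝ) ^ β + β * (j:ℝ) ^ (β - 1) ≤ ((j:ℝ) + 1) ^ β := by
        have hs : (-1:ℝ) ≤ 1 / (j:ℝ) := le_trans (by norm_num) (by positivity : (0:ℝ) ≤ 1 / (j:ℝ))
        have hb := one_add_mul_self_le_rpow_one_add hs hβ1.le
        have heq : ((j:ℝ) + 1) ^ β = (j:ℝ) ^ β * (1 + 1 / (j:ℝ)) ^ β := by
          rw [← Real.mul_rpow hj0.le (by positivity)]
          congr 1
          field_simp
        have heq2 : (j:ℝ) ^ β * (1 / (j:ℝ)) = (j:ℝ) ^ (β - 1) := by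
          rw [Real.rpow_sub hj0, Real.rpow_one]
          ring
        calc (j:ℝ) ^ β + β * (j:ℝ) ^ (β - 1)
            = (j:ℝ) ^ β * (1 + β * (1 / (j:ℝ))) := by
              rw [mul_add, mul_one, ← mul_assoc, mul_comm ((j:ℝ) ^ β) β,
                mul_assoc, heq2]
          _ ≤ (j:ℝ) ^ β * (1 + 1 / (j:ℝ)) ^ β :=
              mul_le_mul_of_nonneg_left hb (by positivity)
          _ = ((j:ℝ) + 1) ^ β := heq.symm
      have hcast : ((j + 1 : ℕ) : ℝ) = (j:ℝ) + 1 := by push_cast; ring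
      rw [hcast]
      calc b (j + 1) ≤ b j + B₁ * (b j ^ (1 / q) + 1) := hrec
        _ ≤ M * (j:ℝ) ^ β + B₁ * (M ^ (1 / q) * (j:ℝ) ^ (β - 1))
            + B₁ * (j:ℝ) ^ (β - 1) := by
            have e1 := mul_le_mul_of_nonneg_left h1 hB₁.le
            have e2 := mul_le_mul_of_nonneg_left hjβ1 hB₁.le
            linarith
        _ ≤ M * (j:ℝ) ^ β + (β / 2 * M) * (j:ℝ) ^ (β - 1)
            + (β / 2 * M) * (j:ℝ) ^ (β - 1) := by
            have hjp : (0:ℝ) ≤ (j:ℝ) ^ (β - 1) := by positivity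
            have e1 := mul_le_mul_of_nonneg_right hMq hjp
            have e2 := mul_le_mul_of_nonneg_right hB₁M hjp
            linarith
        _ = M * ((j:ℝ) ^ β + β * (j:ℝ) ^ (β - 1)) := by ring
        _ ≤ M * ((j:ℝ) + 1) ^ β := mul_le_mul_of_nonneg_left hbern hM0.le
  -- final contradiction
  have hαβ : 0 < α - β := by linarith
  set x : ℝ := (M / C₂ + 1) ^ (1 / (α - β)) with hx
  have hx0 : 0 ≤ x := by positivity
  set N : ℕ := max k₁ ⌈x⌉₊ with hN
  have hNk₁ : k₁ ≤ N := le_max_left _ _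
  have hNx : x ≤ (N:ℝ) := le_trans (Nat.le_ceil x) (by exact_mod_cast le_max_right k₁ ⌈x⌉₊)
  have hN1 : (1:ℝ) ≤ (N:ℝ) := le_trans hk₁1 (by exact_mod_cast hNk₁)
  have hN0 : (0:ℝ) < (N:ℝ) := lt_of_lt_of_le one_pos hN1
  obtain ⟨hlow, -⟩ := h N (le_trans hk₁0 hNk₁)
  have hup := key N hNk₁
  have hsplit : (N:ℝ) ^ α = (N:ℝ) ^ β * (N:ℝ) ^ (α - β) := by
    rw [← Real.rpow_add hN0]; ring_nf
  have hxpow : M / C₂ + 1 ≤ (N:ℝ) ^ (α - β) := by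
    calc M / C₂ + 1 = ((M / C₂ + 1) ^ (1 / (α - β))) ^ (α - β) := by
          rw [← Real.rpow_mul (by positivity), one_div_mul_cancel hαβ.ne', Real.rpow_one]
      _ ≤ (N:ℝ) ^ (α - β) := Real.rpow_le_rpow hx0 hNx hαβ.le
  have hβpos : (0:ℝ) < (N:ℝ) ^ β := Real.rpow_pos_of_pos hN0 β
  have hfinal : C₂ * ((N:ℝ) ^ β * (M / C₂ + 1)) ≤ M * (N:ℝ) ^ β := by
    calc C₂ * ((N:ℝ) ^ β * (M / C₂ + 1))
        ≤ C₂ * ((N:ℝ) ^ β * (N:ℝ) ^ (α - β)) := by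
          apply mul_le_mul_of_nonneg_left _ hC₂.le
          exact mul_le_mul_of_nonneg_left hxpow hβpos.le
      _ = C₂ * (N:ℝ) ^ α := by rw [hsplit]
      _ ≤ b N := hlow
      _ ≤ M * (N:ℝ) ^ β := hup
  have hexp : C₂ * ((N:ℝ) ^ β * (M / C₂ + 1)) = (M + C₂) * (N:ℝ) ^ β := by
    field_simp
  rw [hexp] at hfinal
  nlinarith [hβpos, hC₂]
end
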